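/- arXiv:1908.07077 — 7 statements merged into one kernel-verified Lean document; each statement's English description precedes it below -/
import Mathlib

section
/- Let X be a real Hilbert space, let M : X → 2^X be a maximally monotone operator with zer M ≠ ∅, let x₀ ∈ X, let ε ∈ (0,1), let (λ_n) be a sequence in [ε, 2−ε], and let (γ_n) be a sequence in [ε, ∞). For every n let x̃_n ∈ X and let K_n : X → X be a monotone operator such that ran K_n ⊂ ran(K_n + γ_n M) and K_n + γ_n M is injective. Define sequences by y_n = J^{K_n}_{γ_n M} x̃_n, y_n* = γ_n^{-1}(K_n x̃_n − K_n y_n), and x_{n+1} = x_n + λ_n (⟪y_n − x_n, y_n*⟫/‖y_n*‖²) y_n* if ⟪y_n − x_n, y_n*⟫ < 0, and x_{n+1} = x_n otherwise. Then: (i) Σ_{n∈ℕ} ‖x_{n+1} − x_n‖² < ∞; (ii) if moreover x̃_n − x_n → 0 strongly and the implication [⟪x̃_n − y_n, N(K_n x̃_n − K_n y_n)⟫ → 0 ⟹ (x̃_n − y_n ⇀ 0 weakly and K_n x̃_n − K_n y_n → 0 strongly)] holds, then (x_n) converges weakly to a point in zer M. -/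
open Filter Topology RealInnerProductSpace

/-- `N(u) = u/‖u‖` if `u ≠ 0`, and `N(0) = 0`. -/
noncomputable def nrmz {X : Type*} [NormedAddCommGroup X] [Module ℝ X] (u : X) : X :=
  open Classical in if u = 0 then 0 else ‖u‖⁻¹ • u

lemma auxWeak {X : Type*} [NormedAddCommGroup X] [InnerProductSpace ℝ X] [CompleteSpace X]
    (x : ℕ → X) (R : ℝ) (hb : ∀ n, ‖x n‖ ≤ R) (U : Ultrafilter ℕ) :
    ∃ w : X, ∀ u : X, Tendsto (fun n => ⟪x n, u⟫) (U : Filter ℕ) (𝓝 ⟪w, u⟫) := by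
  have hex : ∀ u : X, ∃ c : ℝ, Tendsto (fun n => ⟪x n, u⟫) (U : Filter ℕ) (𝓝 c) := by
    intro u
    have hcpt : IsCompact (Set.Icc (-(R * ‖u‖)) (R * ‖u‖)) := isCompact_Icc
    have hmem : Set.Icc (-(R * ‖u‖)) (R * ‖u‖) ∈ U.map (fun n => ⟪x n, u⟫) := by
      refine Ultrafilter.mem_map.mpr ?_
      have : ∀ n, ⟪x n, u⟫ ∈ Set.Icc (-(R * ‖u‖)) (R * ‖u‖) := by
        intro n
        have h1 : |⟪x n, u⟫| ≤ ‖x n‖ * ‖u‖ := abs_real_inner_le_norm _ _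
        have h2 : ‖x n‖ * ‖u‖ ≤ R * ‖u‖ := mul_le_mul_of_nonneg_right (hb n) (norm_nonneg _)
        constructor <;> [linarith [neg_abs_le ⟪x n, u⟫]; linarith [le_abs_self ⟪x n, u⟫]]
      exact Filter.univ_mem' this
    obtain ⟨c, _, hc⟩ := hcpt.ultrafilter_le_nhds (U.map (fun n => ⟪x n, u⟫))
      (le_principal_iff.mpr hmem)
    exact ⟨c, hc⟩
  choose c hc using hex
  have hadd : ∀ u v, c (u + v) = c u + c v := by
    intro u v
    refine tendsto_nhds_unique (hc (u + v)) ?_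
    have := (hc u).add (hc v)
    simpa [inner_add_right] using this
  have hsmul : ∀ (r : ℝ) u, c (r • u) = r * c u := by
    intro r u
    refine tendsto_nhds_unique (hc (r • u)) ?_
    have := (hc u).const_mul r
    simpa [real_inner_smul_right] using this
  have hbound : ∀ u, ‖c u‖ ≤ R * ‖u‖ := by
    intro u
    rw [Real.norm_eq_abs]
    have : Tendsto (fun n => |⟪x n, u⟫|) (U : Filter ℕ) (𝓝 |c u|) := (hc u).abs
    refine le_of_tendsto this (Filter.Eventually.of_forall fun n => ?_)
    calc |⟪x n, u⟫| ≤ ‖x n‖ * ‖u‖ := abs_real_inner_le_norm _ _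
      _ ≤ R * ‖u‖ := mul_le_mul_of_nonneg_right (hb n) (norm_nonneg _)
  let L : X →ₗ[ℝ] ℝ := { toFun := c, map_add' := hadd, map_smul' := hsmul }
  let Lc : X →L[ℝ] ℝ := LinearMap.mkContinuous L R hbound
  refine ⟨(InnerProductSpace.toDual ℝ X).symm Lc, fun u => ?_⟩
  have : ⟪(InnerProductSpace.toDual ℝ X).symm Lc, u⟫ = Lc u :=
    InnerProductSpace.toDual_symm_apply
  rw [this]
  exact hc u

set_option maxHeartbeats 1000000 in
/-- Theorem 4.2 (warped proximal iterations, weak convergence). -/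
theorem stmt_0
    {X : Type*} [NormedAddCommGroup X] [InnerProductSpace ℝ X] [CompleteSpace X]
    (M : X → Set X)
    (hMmono : ∀ x y u v, u ∈ M x → v ∈ M y → (0:ℝ) ≤ ⟪x - y, u - v⟫)
    (hMmax : ∀ A : X → Set X,
      (∀ x y u v, u ∈ A x → v ∈ A y → (0:ℝ) ≤ ⟪x - y, u - v⟫) →
      (∀ x, M x ⊆ A x) → ∀ x, A x ⊆ M x)
    (hZ : ∃ z, (0:X) ∈ M z)
    (x₀ : X) (ε : ℝ) (hε : ε ∈ Set.Ioo (0:ℝ) 1)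
    (lam : ℕ → ℝ) (hlam : ∀ n, lam n ∈ Set.Icc ε (2 - ε))
    (γ : ℕ → ℝ) (hγ : ∀ n, ε ≤ γ n)
    (xt : ℕ → X) (K : ℕ → X → X)
    (hKmono : ∀ n x y, (0:ℝ) ≤ ⟪x - y, K n x - K n y⟫)
    (hKran : ∀ n x, ∃ p u, u ∈ M p ∧ K n x = K n p + γ n • u)
    (hKinj : ∀ n p q up uq, up ∈ M p → uq ∈ M q →
      K n p + γ n • up = K n q + γ n • uq → p = q)
    (y ystar x : ℕ → X)
    (hy : ∀ n, (γ n)⁻¹ • (K n (xt n) - K n (y n)) ∈ M (y n))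
    (hystar : ∀ n, ystar n = (γ n)⁻¹ • (K n (xt n) - K n (y n)))
    (hx0 : x 0 = x₀)
    (hxrec : ∀ n, x (n + 1) =
      if ⟪y n - x n, ystar n⟫ < 0 then
        x n + ((lam n * ⟪y n - x n, ystar n⟫) / ‖ystar n‖ ^ 2) • ystar n
      else x n) :
    Summable (fun n => ‖x (n + 1) - x n‖ ^ 2) ∧
    (Tendsto (fun n => xt n - x n) atTop (𝓝 (0:X)) →
      (Tendsto (fun n => ⟪xt n - y n, nrmz (K n (xt n) - K n (y n))⟫) atTop (𝓝 (0:ℝ)) →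
        (∀ u : X, Tendsto (fun n => ⟪xt n - y n, u⟫) atTop (𝓝 (0:ℝ))) ∧
          Tendsto (fun n => K n (xt n) - K n (y n)) atTop (𝓝 (0:X))) →
      ∃ z, (0:X) ∈ M z ∧ ∀ u : X, Tendsto (fun n => ⟪x n, u⟫) atTop (𝓝 ⟪z, u⟫)) := by
  obtain ⟨z₀, hz₀⟩ := hZ
  have hε1 : (0:ℝ) < ε := hε.1
  have hε2 : ε < 1 := hε.2
  have hγpos : ∀ n, (0:ℝ) < γ n := fun n => lt_of_lt_of_le hε1 (hγ n)
  have hyM : ∀ n, ystar n ∈ M (y n) := fun n => by rw [hystar n]; exact hy n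
  have hKid : ∀ n, K n (xt n) - K n (y n) = γ n • ystar n := by
    intro n
    rw [hystar n, smul_smul, mul_inv_cancel₀ (hγpos n).ne', one_smul]
  -- Fejér inequality
  have fejer : ∀ p, (0:X) ∈ M p → ∀ n,
      ‖x (n+1) - p‖^2 + (ε/2) * ‖x (n+1) - x n‖^2 ≤ ‖x n - p‖^2 := by
    intro p hp n
    by_cases hd : ⟪y n - x n, ystar n⟫ < 0
    · have hys : ystar n ≠ 0 := by
        intro h0
        rw [h0] at hd; simp at hd
      set d := ⟪y n - x n, ystar n⟫ with hdd
      set s := ‖ystar n‖^2 with hss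
      have hs : (0:ℝ) < s := by
        rw [hss]; exact pow_pos (norm_pos_iff.mpr hys) 2
      have hmon : (0:ℝ) ≤ ⟪y n - p, ystar n⟫ := by
        have := hMmono (y n) p (ystar n) 0 (hyM n) hp
        simpa using this
      have key : -d ≤ ⟪x n - p, ystar n⟫ := by
        have hsplit : ⟪x n - p, ystar n⟫ = -d + ⟪y n - p, ystar n⟫ := by
          have h1 : x n - p = -(y n - x n) + (y n - p) := by abel
          rw [h1, inner_add_left, inner_neg_left]
        linarith
      set t := (lam n * d) / s with htdef
      have hx1 : x (n+1) = x n + t • ystar n := by rw [hxrec n]; exact if_pos hd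
      have hΔ : x (n+1) - x n = t • ystar n := by rw [hx1]; abel
      have hΔnorm : ‖x (n+1) - x n‖^2 = t^2 * s := by
        rw [hΔ, norm_smul, mul_pow, Real.norm_eq_abs, sq_abs, hss]
      have expand : ‖x (n+1) - p‖^2 = ‖x n - p‖^2 + 2*(t*⟪x n - p, ystar n⟫) + t^2*s := by
        have h1 : x (n+1) - p = (x n - p) + t • ystar n := by rw [hx1]; abel
        rw [h1, @norm_add_sq_real, real_inner_smul_right, norm_smul, mul_pow,
          Real.norm_eq_abs, sq_abs]
      rw [expand, hΔnorm]
      have hlam1 := (hlam n).1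
      have hlam2 := (hlam n).2
      have ht_neg : t < 0 := by
        apply div_neg_of_neg_of_pos _ hs
        exact mul_neg_of_pos_of_neg (by linarith) hd
      have hts : t * s = lam n * d := by rw [htdef, div_mul_cancel₀ _ hs.ne']
      have h2 : t^2 * s = lam n * (t * d) := by
        calc t^2 * s = t * (t * s) := by ring
          _ = t * (lam n * d) := by rw [hts]
          _ = lam n * (t * d) := by ring
      have h3 : t * ⟪x n - p, ystar n⟫ ≤ t * (-d) :=
        mul_le_mul_of_nonpos_left key (le_of_lt ht_neg)
      have htd : 0 < t * d := mul_pos_of_neg_of_neg ht_neg hd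
      have h4 : lam n * (t * d) ≤ (2 - ε) * (t * d) :=
        mul_le_mul_of_nonneg_right hlam2 htd.le
      have h5 : (1 + ε/2) * (lam n * (t * d)) ≤ (1 + ε/2) * ((2 - ε) * (t * d)) :=
        mul_le_mul_of_nonneg_left h4 (by linarith)
      nlinarith [h2, h3, htd, h5, hε1, mul_pos (mul_pos hε1 hε1) htd]
    · have hx1 : x (n+1) = x n := by rw [hxrec n]; simp [hd]
      rw [hx1]
      simp
  -- summability
  have hpartial : ∀ N, ‖x N - z₀‖^2 + (ε/2) * ∑ n ∈ Finset.range N, ‖x (n+1) - x n‖^2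
      ≤ ‖x 0 - z₀‖^2 := by
    intro N
    induction N with
    | zero => simp
    | succ N ih =>
      have := fejer z₀ hz₀ N
      rw [Finset.sum_range_succ]
      linarith
  have hsum : Summable (fun n => ‖x (n + 1) - x n‖ ^ 2) := by
    refine summable_of_sum_range_le (c := (2/ε) * ‖x 0 - z₀‖^2)
      (fun n => by positivity) (fun N => ?_)
    have h1 := hpartial N
    have h2 : (0:ℝ) ≤ ‖x N - z₀‖^2 := sq_nonneg _
    calc ∑ n ∈ Finset.range N, ‖x (n+1) - x n‖^2
        = (2/ε) * ((ε/2) * ∑ n ∈ Finset.range N, ‖x (n+1) - x n‖^2) := by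
          field_simp
      _ ≤ (2/ε) * ‖x 0 - z₀‖^2 := by
          apply mul_le_mul_of_nonneg_left (by linarith) (by positivity)
  refine ⟨hsum, ?_⟩
  intro H1 H2
  -- antitone norms
  have hanti : ∀ p, (0:X) ∈ M p → Antitone (fun n => ‖x n - p‖^2) := by
    intro p hp
    apply antitone_nat_of_succ_le
    intro n
    have h1 := fejer p hp n
    nlinarith [sq_nonneg ‖x (n+1) - x n‖]
  -- bound
  set R := ‖x 0 - z₀‖ + ‖z₀‖ with hR
  have hb : ∀ n, ‖x n‖ ≤ R := by
    intro n
    have h1 : ‖x n - z₀‖^2 ≤ ‖x 0 - z₀‖^2 := hanti z₀ hz₀ (Nat.zero_le n)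
    have h2 : ‖x n - z₀‖ ≤ ‖x 0 - z₀‖ := by
      nlinarith [norm_nonneg (x n - z₀), norm_nonneg (x 0 - z₀)]
    have h3 : ‖x n‖ ≤ ‖x n - z₀‖ + ‖z₀‖ := by
      have := norm_add_le (x n - z₀) z₀
      simpa using this
    linarith
  -- step differences tend to zero
  have hΔ2 : Tendsto (fun n => ‖x (n+1) - x n‖^2) atTop (𝓝 0) := hsum.tendsto_atTop_zero
  have hΔ0 : Tendsto (fun n => ‖x (n+1) - x n‖) atTop (𝓝 0) := by
    have h1 : Tendsto (fun n => Real.sqrt (‖x (n+1) - x n‖^2)) atTop (𝓝 (Real.sqrt 0)) :=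
      (Real.continuous_sqrt.tendsto 0).comp hΔ2
    simpa [Real.sqrt_sq (norm_nonneg _)] using h1
  -- squeeze for the e-sequence
  have he0 : Tendsto (fun n => ⟪xt n - y n, nrmz (K n (xt n) - K n (y n))⟫) atTop (𝓝 (0:ℝ)) := by
    have hel : ∀ n, (0:ℝ) ≤ ⟪xt n - y n, nrmz (K n (xt n) - K n (y n))⟫ := by
      intro n
      by_cases h0 : K n (xt n) - K n (y n) = 0
      · simp [nrmz, h0]
      · rw [show nrmz (K n (xt n) - K n (y n)) =
            ‖K n (xt n) - K n (y n)‖⁻¹ • (K n (xt n) - K n (y n)) by simp [nrmz, h0],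
          real_inner_smul_right]
        exact mul_nonneg (inv_nonneg.mpr (norm_nonneg _)) (hKmono n _ _)
    have heu : ∀ n, ⟪xt n - y n, nrmz (K n (xt n) - K n (y n))⟫
        ≤ ‖xt n - x n‖ + ‖x (n+1) - x n‖ / ε := by
      intro n
      by_cases h0 : K n (xt n) - K n (y n) = 0
      · have : (0:ℝ) ≤ ‖xt n - x n‖ + ‖x (n+1) - x n‖ / ε := by positivity
        simpa [nrmz, h0] using this
      · have hys : ystar n ≠ 0 := by
          intro hy0
          rw [hKid n, hy0, smul_zero] at h0
          exact h0 rfl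
        have hny : (0:ℝ) < ‖ystar n‖ := norm_pos_iff.mpr hys
        have hnrm : nrmz (K n (xt n) - K n (y n)) = ‖ystar n‖⁻¹ • ystar n := by
          rw [hKid n]
          have hne : γ n • ystar n ≠ 0 := by rw [← hKid n]; exact h0
          simp only [nrmz, hne, if_false]
          rw [smul_smul, norm_smul, Real.norm_eq_abs, abs_of_pos (hγpos n)]
          congr 1
          field_simp
          exact div_self (hγpos n).ne'
        rw [hnrm, real_inner_smul_right]
        have hinner : ⟪xt n - y n, ystar n⟫
            = ⟪xt n - x n, ystar n⟫ - ⟪y n - x n, ystar n⟫ := by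
          have h : xt n - y n = (xt n - x n) - (y n - x n) := by abel
          rw [h, inner_sub_left]
        have h1 : ⟪xt n - x n, ystar n⟫ ≤ ‖xt n - x n‖ * ‖ystar n‖ :=
          real_inner_le_norm _ _
        set d := ⟪y n - x n, ystar n⟫ with hdd
        by_cases hd : d < 0
        · have hΔeq : ‖x (n+1) - x n‖ = (lam n * (-d)) / ‖ystar n‖ := by
            rw [hxrec n]
            simp only [← hdd, hd, if_true]
            rw [add_sub_cancel_left, norm_smul, Real.norm_eq_abs]
            rw [abs_of_neg (div_neg_of_neg_of_pos
              (mul_neg_of_pos_of_neg (by linarith [(hlam n).1]) hd)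
              (pow_pos hny 2))]
            field_simp
          have e_le : ‖ystar n‖⁻¹ * ⟪xt n - y n, ystar n⟫
              ≤ ‖xt n - x n‖ + (-d) / ‖ystar n‖ := by
            rw [hinner]
            have hmul : ‖ystar n‖⁻¹ * (⟪xt n - x n, ystar n⟫ - d)
                ≤ ‖ystar n‖⁻¹ * (‖xt n - x n‖ * ‖ystar n‖ - d) := by
              apply mul_le_mul_of_nonneg_left (by linarith) (inv_nonneg.mpr hny.le)
            calc ‖ystar n‖⁻¹ * (⟪xt n - x n, ystar n⟫ - d)
                ≤ ‖ystar n‖⁻¹ * (‖xt n - x n‖ * ‖ystar n‖ - d) := hmul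
              _ = ‖xt n - x n‖ + (-d) / ‖ystar n‖ := by
                  field_simp
                  ring
          have step2 : (-d) / ‖ystar n‖ ≤ ‖x (n+1) - x n‖ / ε := by
            rw [hΔeq, div_div]
            rw [div_le_div_iff₀ hny (by positivity)]
            have hεlam := (hlam n).1
            nlinarith [mul_pos (neg_pos.mpr hd) hny, hεlam, hny, hε1]
          linarith
        · push_neg at hd
          have hmul : ‖ystar n‖⁻¹ * ⟪xt n - y n, ystar n⟫
              ≤ ‖ystar n‖⁻¹ * (‖xt n - x n‖ * ‖ystar n‖) := by
            apply mul_le_mul_of_nonneg_left _ (inv_nonneg.mpr hny.le)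
            rw [hinner]; linarith
          have heq : ‖ystar n‖⁻¹ * (‖xt n - x n‖ * ‖ystar n‖) = ‖xt n - x n‖ := by
            field_simp
          have hpos : (0:ℝ) ≤ ‖x (n+1) - x n‖ / ε := by positivity
          linarith [hmul, heq ▸ hmul]
    have hc0 : Tendsto (fun n => ‖xt n - x n‖ + ‖x (n+1) - x n‖ / ε) atTop (𝓝 0) := by
      have h1 : Tendsto (fun n => ‖xt n - x n‖) atTop (𝓝 0) := by
        have := H1.norm
        simpa using this
      have h2 : Tendsto (fun n => ‖x (n+1) - x n‖ / ε) atTop (𝓝 0) := by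
        have := hΔ0.div_const ε
        simpa using this
      have := h1.add h2
      simpa using this
    exact squeeze_zero hel heu hc0
  obtain ⟨HW, HS⟩ := H2 he0
  -- ystar tends to zero strongly
  have hystar0 : Tendsto ystar atTop (𝓝 (0:X)) := by
    have hbnd : ∀ n, ‖ystar n‖ ≤ ε⁻¹ * ‖K n (xt n) - K n (y n)‖ := by
      intro n
      rw [hystar n, norm_smul, Real.norm_eq_abs, abs_of_pos (inv_pos.mpr (hγpos n))]
      exact mul_le_mul_of_nonneg_right (inv_anti₀ hε1 (hγ n)) (norm_nonneg _)
    have htnd : Tendsto (fun n => ε⁻¹ * ‖K n (xt n) - K n (y n)‖) atTop (𝓝 0) := by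
      have := HS.norm.const_mul ε⁻¹
      simpa using this
    exact squeeze_zero_norm hbnd htnd
  -- the key ultrafilter step
  have keyU : ∀ U : Ultrafilter ℕ, (U : Filter ℕ) ≤ atTop →
      ∃ w : X, (0:X) ∈ M w ∧
        ∀ u : X, Tendsto (fun n => ⟪x n, u⟫) (U : Filter ℕ) (𝓝 ⟪w, u⟫) := by
    intro U hU
    obtain ⟨w, hw⟩ := auxWeak x R hb U
    refine ⟨w, ?_, hw⟩
    have hkey : ∀ p u, u ∈ M p → (0:ℝ) ≤ ⟪w - p, (0:X) - u⟫ := by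
      intro p u hu
      have hmono_n : ∀ n, ⟪y n - p, u⟫
          ≤ ⟪xt n - x n, ystar n⟫ + ⟪x n - p, ystar n⟫ := by
        intro n
        have h1 : (0:ℝ) ≤ ⟪y n - p, ystar n - u⟫ := hMmono _ _ _ _ (hyM n) hu
        have h2 : ⟪y n - xt n, ystar n⟫ ≤ 0 := by
          have hK := hKmono n (xt n) (y n)
          have heq : ⟪y n - xt n, ystar n⟫
              = -((γ n)⁻¹ * ⟪xt n - y n, K n (xt n) - K n (y n)⟫) := by
            rw [hystar n, real_inner_smul_right]
            have : y n - xt n = -(xt n - y n) := by abel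
            rw [this, inner_neg_left]
            ring
          rw [heq]
          have : (0:ℝ) ≤ (γ n)⁻¹ * ⟪xt n - y n, K n (xt n) - K n (y n)⟫ :=
            mul_nonneg (inv_nonneg.mpr (hγpos n).le) hK
          linarith
        have hsplit : ⟪y n - p, ystar n⟫
            = ⟪y n - xt n, ystar n⟫ + ⟪xt n - x n, ystar n⟫ + ⟪x n - p, ystar n⟫ := by
          have h : y n - p = (y n - xt n) + (xt n - x n) + (x n - p) := by abel
          rw [h, inner_add_left, inner_add_left]
        have h3 : ⟪y n - p, u⟫ ≤ ⟪y n - p, ystar n⟫ := by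
          rw [inner_sub_right] at h1
          linarith
        linarith
      have ha : Tendsto (fun n => ⟪xt n - x n, ystar n⟫ + ⟪x n - p, ystar n⟫)
          atTop (𝓝 0) := by
        have t1 : Tendsto (fun n => ⟪xt n - x n, ystar n⟫) atTop (𝓝 0) := by
          have := Filter.Tendsto.inner (𝕜 := ℝ) H1 hystar0
          simpa using this
        have t2 : Tendsto (fun n => ⟪x n - p, ystar n⟫) atTop (𝓝 0) := by
          have hbnd : ∀ n, ‖⟪x n - p, ystar n⟫‖ ≤ (R + ‖p‖) * ‖ystar n‖ := by
            intro n
            have h1 : |⟪x n - p, ystar n⟫| ≤ ‖x n - p‖ * ‖ystar n‖ :=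
              abs_real_inner_le_norm _ _
            have h2 : ‖x n - p‖ ≤ R + ‖p‖ := by
              have h3 := norm_sub_le (x n) p
              have h4 := hb n
              linarith
            calc ‖⟪x n - p, ystar n⟫‖ = |⟪x n - p, ystar n⟫| := rfl
              _ ≤ ‖x n - p‖ * ‖ystar n‖ := h1
              _ ≤ (R + ‖p‖) * ‖ystar n‖ :=
                  mul_le_mul_of_nonneg_right h2 (norm_nonneg _)
          have htnd : Tendsto (fun n => (R + ‖p‖) * ‖ystar n‖) atTop (𝓝 0) := by
            have := hystar0.norm.const_mul (R + ‖p‖)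
            simpa using this
          exact squeeze_zero_norm hbnd htnd
        have := t1.add t2
        simpa using this
      have hyU : Tendsto (fun n => ⟪y n - p, u⟫) (U : Filter ℕ) (𝓝 ⟪w - p, u⟫) := by
        have hdec : ∀ n, ⟪y n - p, u⟫
            = -⟪xt n - y n, u⟫ + ⟪xt n - x n, u⟫ + (⟪x n, u⟫ - ⟪p, u⟫) := by
          intro n
          have h : y n - p = -(xt n - y n) + (xt n - x n) + (x n - p) := by abel
          rw [h]
          simp only [inner_add_left, inner_neg_left, inner_sub_left]
        have t1 : Tendsto (fun n => -⟪xt n - y n, u⟫) (U : Filter ℕ) (𝓝 0) := by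
          have := ((HW u).neg).mono_left hU
          simpa using this
        have t2 : Tendsto (fun n => ⟪xt n - x n, u⟫) (U : Filter ℕ) (𝓝 0) := by
          have := (Filter.Tendsto.inner (𝕜 := ℝ) H1 (tendsto_const_nhds (x := u))).mono_left hU
          simpa using this
        have t3 : Tendsto (fun n => ⟪x n, u⟫ - ⟪p, u⟫) (U : Filter ℕ)
            (𝓝 (⟪w, u⟫ - ⟪p, u⟫)) := (hw u).sub tendsto_const_nhds
        have hcomb := (t1.add t2).add t3
        simp only [hdec]
        have hval : (0:ℝ) + 0 + (⟪w, u⟫ - ⟪p, u⟫) = ⟪w - p, u⟫ := by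
          rw [inner_sub_left]; ring
        rw [← hval]
        exact hcomb
      have hfin : ⟪w - p, u⟫ ≤ 0 :=
        le_of_tendsto_of_tendsto' hyU (ha.mono_left hU) hmono_n
      have : ⟪w - p, (0:X) - u⟫ = -⟪w - p, u⟫ := by
        rw [zero_sub, inner_neg_right]
      rw [this]
      linarith
    set A : X → Set X := fun q => M q ∪ {v | q = w ∧ v = 0} with hA
    have hAmono : ∀ a b ua ub, ua ∈ A a → ub ∈ A b → (0:ℝ) ≤ ⟪a - b, ua - ub⟫ := by
      intro a b ua ub hua hub
      have flip : ∀ (c d uc ud : X), ⟪c - d, uc - ud⟫ = ⟪d - c, ud - uc⟫ := by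
        intro c d uc ud
        have h1 : c - d = -(d - c) := by abel
        have h2 : uc - ud = -(ud - uc) := by abel
        rw [h1, h2, inner_neg_neg]
      rcases hua with hua | ⟨ha1, ha2⟩
      · rcases hub with hub | ⟨hb1, hb2⟩
        · exact hMmono a b ua ub hua hub
        · rw [hb1, hb2, flip]
          exact hkey a ua hua
      · rcases hub with hub | ⟨hb1, hb2⟩
        · rw [ha1, ha2]
          exact hkey b ub hub
        · rw [ha1, ha2, hb1, hb2]
          simp
    have hsub : ∀ q, M q ⊆ A q := fun q => Set.subset_union_left
    have h0A : (0:X) ∈ A w := Or.inr ⟨rfl, rfl⟩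
    exact hMmax A hAmono hsub w h0A
  -- limit of the squared distances
  have hql : ∀ p, (0:X) ∈ M p → ∃ l : ℝ, Tendsto (fun n => ‖x n - p‖^2) atTop (𝓝 l) := by
    intro p hp
    refine ⟨⨅ n, ‖x n - p‖^2, tendsto_atTop_ciInf (hanti p hp) ⟨0, ?_⟩⟩
    rintro r ⟨n, rfl⟩
    exact sq_nonneg _
  -- conclusion
  obtain ⟨z, hz, hzconv⟩ := keyU (Ultrafilter.of atTop) (Ultrafilter.of_le _)
  refine ⟨z, hz, fun u => ?_⟩
  rw [tendsto_iff_ultrafilter]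
  intro U hU
  obtain ⟨w, hw0, hwconv⟩ := keyU U hU
  obtain ⟨lz, hlz⟩ := hql z hz
  obtain ⟨lw, hlw⟩ := hql w hw0
  have hid : ∀ n, ⟪x n, w - z⟫ = (‖x n - z‖^2 - ‖x n - w‖^2 - ‖z‖^2 + ‖w‖^2)/2 := by
    intro n
    have e1 : ‖x n - z‖^2 = ‖x n‖^2 - 2*⟪x n, z⟫ + ‖z‖^2 := @norm_sub_sq_real _ _ _ _ _
    have e2 : ‖x n - w‖^2 = ‖x n‖^2 - 2*⟪x n, w⟫ + ‖w‖^2 := @norm_sub_sq_real _ _ _ _ _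
    rw [inner_sub_right]
    linarith
  have hbt : Tendsto (fun n => ⟪x n, w - z⟫) atTop
      (𝓝 ((lz - lw - ‖z‖^2 + ‖w‖^2)/2)) := by
    simp only [hid]
    exact (((hlz.sub hlw).sub tendsto_const_nhds).add tendsto_const_nhds).div_const 2
  have e1 : ⟪w, w - z⟫ = (lz - lw - ‖z‖^2 + ‖w‖^2)/2 :=
    tendsto_nhds_unique (hwconv (w - z)) (hbt.mono_left hU)
  have e2 : ⟪z, w - z⟫ = (lz - lw - ‖z‖^2 + ‖w‖^2)/2 :=
    tendsto_nhds_unique (hzconv (w - z)) (hbt.mono_left (Ultrafilter.of_le _))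
  have hwz : w = z := by
    have h3 : ⟪w - z, w - z⟫ = 0 := by
      rw [inner_sub_left]
      linarith
    have := inner_self_eq_zero.mp h3
    exact sub_eq_zero.mp this
  rw [← hwz]
  exact hwconv u
end

section
/- Let X be a real Hilbert space, let M : X → 2^X be a maximally monotone operator with Z = zer M ≠ ∅, let x₀ ∈ X, and let (γ_n) be a sequence in (0,∞) with inf_n γ_n > 0. For every n let x̃_n ∈ X and let K_n : X → X be a monotone operator such that ran K_n ⊂ ran(K_n + γ_n M) and K_n + γ_n M is injective. Define y_n = J^{K_n}_{γ_n M} x̃_n, y_n* = γ_n^{-1}(K_n x̃_n − K_n y_n), x_{n+1/2} = x_n + (⟪y_n − x_n, y_n*⟫/‖y_n*‖²) y_n* if ⟪y_n − x_n, y_n*⟫ < 0 and x_{n+1/2} = x_n otherwise, and x_{n+1} = Q(x₀, x_n, x_{n+1/2}), the projection of x₀ onto H(x₀,x_n) ∩ H(x_n,x_{n+1/2}). Then: (i) Σ_n ‖x_{n+1} − x_n‖² < ∞ and Σ_n ‖x_{n+1/2} − x_n‖² < ∞; (ii) if moreover x̃_n − x_n → 0 strongly and the implication [⟪x̃_n −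 y_n, N(K_n x̃_n − K_n y_n)⟫ → 0 ⟹ (x̃_n − y_n ⇀ 0 weakly and K_n x̃_n − K_n y_n → 0 strongly)] holds, then (x_n) converges strongly to proj_Z x₀, the point of Z nearest x₀. -/
open Filter Topology RealInnerProductSpace

/-- The half-space `H(x,y) = {u : ⟪u - y, x - y⟫ ≤ 0}`. -/
def Hset {X : Type*} [NormedAddCommGroup X] [InnerProductSpace ℝ X] (x y : X) : Set X :=
  {u | ⟪u - y, x - y⟫ ≤ 0}

section Aux
variable {X : Type*} [NormedAddCommGroup X] [InnerProductSpace ℝ X]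

lemma hs_convex (u p : X) (r : ℝ) : Convex ℝ {v : X | ⟪v - p, u⟫ ≤ r} := by
  intro a ha b hb s t hs ht hst
  simp only [Set.mem_setOf_eq] at *
  have hsplit : (s • a + t • b) - p = s • (a - p) + t • (b - p) := by
    have hp : p = s • p + t • p := by rw [← add_smul, hst, one_smul]
    rw [smul_sub, smul_sub]
    nth_rewrite 1 [hp]
    abel
  rw [hsplit, inner_add_left, real_inner_smul_left, real_inner_smul_left]
  have hr : s*r + t*r = r := by rw [← add_mul, hst, one_mul]
  linarith [mul_le_mul_of_nonneg_left ha hs, mul_le_mul_of_nonneg_left hb ht]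

lemma hs_closed (u p : X) (r : ℝ) : IsClosed {v : X | ⟪v - p, u⟫ ≤ r} := by
  apply isClosed_le _ continuous_const
  exact Continuous.inner (continuous_id.sub continuous_const) continuous_const

lemma proj_vi {C : Set X} (hC : Convex ℝ C) {x₀ w : X} (hw : w ∈ C)
    (hmin : ∀ v ∈ C, ‖x₀ - w‖ ≤ ‖x₀ - v‖) : ∀ v ∈ C, ⟪v - w, x₀ - w⟫ ≤ 0 := by
  intro v hv
  have key : ∀ t : ℝ, 0 ≤ t → t ≤ 1 → 2 * t * ⟪x₀ - w, v - w⟫ ≤ t^2 * ‖v - w‖^2 := by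
    intro t ht ht1
    have hmem : (1 - t) • w + t • v ∈ C := hC hw hv (by linarith) ht (by ring)
    have h1 := hmin _ hmem
    have h2 : x₀ - ((1 - t) • w + t • v) = (x₀ - w) - t • (v - w) := by
      module
    have h3 : ‖x₀ - w‖^2 ≤ ‖(x₀ - w) - t • (v - w)‖^2 := by
      rw [← h2]; exact pow_le_pow_left₀ (norm_nonneg _) h1 2
    rw [norm_sub_sq_real (x₀ - w) (t • (v - w)), real_inner_smul_right, norm_smul, mul_pow] at h3
    simp only [Real.norm_eq_abs, sq_abs] at h3
    nlinarith
  rw [real_inner_comm]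
  by_contra h
  push_neg at h
  set a := ⟪x₀ - w, v - w⟫ with ha
  set q := ‖v - w‖^2 with hq
  have hq0 : 0 ≤ q := sq_nonneg _
  set t := min 1 (a / (2*q+1)) with htd
  have ht := key t (le_min (by norm_num) (by positivity)) (min_le_left _ _)
  have h5 : t ≤ a / (2*q+1) := min_le_right _ _
  have h6 : 0 < t := lt_min (by norm_num) (by positivity)
  have h7 : t * q ≤ a / 2 := by
    calc t * q ≤ a / (2*q+1) * q := mul_le_mul_of_nonneg_right h5 hq0
    _ ≤ a / 2 := by
        rw [div_mul_eq_mul_div, div_le_div_iff₀ (by positivity) (by norm_num)]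
        nlinarith
  nlinarith [mul_le_mul_of_nonneg_left h7 h6.le, mul_pos h6 h, sq_nonneg t]

lemma nrmz_pos_smul {X : Type*} [NormedAddCommGroup X] [InnerProductSpace ℝ X]
    (u : X) (t : ℝ) (ht : 0 < t) : nrmz (t • u) = nrmz u := by
  by_cases h0 : u = 0
  · rw [h0, smul_zero]
  · have htu : t • u ≠ 0 := smul_ne_zero ht.ne' h0
    rw [nrmz, nrmz, if_neg htu, if_neg h0, norm_smul, Real.norm_eq_abs, abs_of_pos ht, smul_smul]
    congr 1
    rw [mul_inv, mul_comm, ← mul_assoc, mul_inv_cancel₀ ht.ne', one_mul]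

end Aux

set_option maxHeartbeats 2000000 in
/-- Theorem 4.8 (warped proximal iterations, strong convergence). -/
theorem stmt_1
    {X : Type*} [NormedAddCommGroup X] [InnerProductSpace ℝ X] [CompleteSpace X]
    (M : X → Set X)
    (hMmono : ∀ x y u v, u ∈ M x → v ∈ M y → (0:ℝ) ≤ ⟪x - y, u - v⟫)
    (hMmax : ∀ A : X → Set X,
      (∀ x y u v, u ∈ A x → v ∈ A y → (0:ℝ) ≤ ⟪x - y, u - v⟫) →
      (∀ x, M x ⊆ A x) → ∀ x, A x ⊆ M x)
    (hZ : ∃ z, (0:X) ∈ M z)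
    (x₀ : X)
    (γ : ℕ → ℝ) (hγpos : ∀ n, 0 < γ n) (hγinf : ∃ c, 0 < c ∧ ∀ n, c ≤ γ n)
    (xt : ℕ → X) (K : ℕ → X → X)
    (hKmono : ∀ n x y, (0:ℝ) ≤ ⟪x - y, K n x - K n y⟫)
    (hKran : ∀ n x, ∃ p u, u ∈ M p ∧ K n x = K n p + γ n • u)
    (hKinj : ∀ n p q up uq, up ∈ M p → uq ∈ M q →
      K n p + γ n • up = K n q + γ n • uq → p = q)
    (y ystar x xh : ℕ → X)
    (hy : ∀ n, (γ n)⁻¹ • (K n (xt n) - K n (y n)) ∈ M (y n))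
    (hystar : ∀ n, ystar n = (γ n)⁻¹ • (K n (xt n) - K n (y n)))
    (hx0 : x 0 = x₀)
    (hxh : ∀ n, xh n =
      if ⟪y n - x n, ystar n⟫ < 0 then
        x n + (⟪y n - x n, ystar n⟫ / ‖ystar n‖ ^ 2) • ystar n
      else x n)
    (hQ : ∀ n, x (n + 1) ∈ Hset x₀ (x n) ∩ Hset (x n) (xh n) ∧
      ∀ w ∈ Hset x₀ (x n) ∩ Hset (x n) (xh n), ‖x₀ - x (n + 1)‖ ≤ ‖x₀ - w‖) :
    (Summable (fun n => ‖x (n + 1) - x n‖ ^ 2) ∧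
      Summable (fun n => ‖xh n - x n‖ ^ 2)) ∧
    (Tendsto (fun n => xt n - x n) atTop (𝓝 (0:X)) →
      (Tendsto (fun n => ⟪xt n - y n, nrmz (K n (xt n) - K n (y n))⟫) atTop (𝓝 (0:ℝ)) →
        (∀ u : X, Tendsto (fun n => ⟪xt n - y n, u⟫) atTop (𝓝 (0:ℝ))) ∧
          Tendsto (fun n => K n (xt n) - K n (y n)) atTop (𝓝 (0:X))) →
      ∃ z, (0:X) ∈ M z ∧ (∀ w, (0:X) ∈ M w → ‖x₀ - z‖ ≤ ‖x₀ - w‖) ∧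
        Tendsto x atTop (𝓝 z)) := by
  classical
  obtain ⟨z0, hz0⟩ := hZ
  -- Fact A
  have factA : ∀ z, (0:X) ∈ M z → ∀ n, ⟪z - y n, ystar n⟫ ≤ 0 := by
    intro z hz n
    have h := hMmono (y n) z _ 0 (hy n) hz
    rw [hystar n]
    rw [sub_zero] at h
    have e1 : ⟪y n - z, (γ n)⁻¹ • (K n (xt n) - K n (y n))⟫
        = -⟪z - y n, (γ n)⁻¹ • (K n (xt n) - K n (y n))⟫ := by
      rw [← inner_neg_left]; congr 1; abel
    linarith [e1 ▸ h]
  -- Fact B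
  have factB : ∀ z, (0:X) ∈ M z → ∀ n, z ∈ Hset (x n) (xh n) := by
    intro z hz n
    show ⟪z - xh n, x n - xh n⟫ ≤ 0
    by_cases hc : ⟪y n - x n, ystar n⟫ < 0
    · have hys : ystar n ≠ 0 := by
        intro h0; rw [h0, inner_zero_right] at hc; exact lt_irrefl 0 hc
      have hns : (0:ℝ) < ‖ystar n‖^2 := by have := norm_pos_iff.mpr hys; positivity
      set c := ⟪y n - x n, ystar n⟫ with hcc
      set lam := c / ‖ystar n‖^2 with hlam
      have hxhn : xh n = x n + lam • ystar n := by rw [hxh n, if_pos hc]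
      have e1 : z - xh n = (z - x n) - lam • ystar n := by rw [hxhn]; abel
      have e2 : x n - xh n = -(lam • ystar n) := by rw [hxhn]; abel
      rw [e1, e2, inner_neg_right, inner_sub_left, real_inner_smul_right,
        real_inner_smul_left, real_inner_smul_right, real_inner_self_eq_norm_sq]
      have hlc : lam * ‖ystar n‖^2 = c := by rw [hlam, div_mul_cancel₀ _ hns.ne']
      have e3 : ⟪z - y n, ystar n⟫ = ⟪z - x n, ystar n⟫ - c := by
        rw [hcc, ← inner_sub_left]; congr 1; abel
      have hlneg : lam < 0 := div_neg_of_neg_of_pos hc hns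
      nlinarith [factA z hz n]
    · rw [hxh n, if_neg hc, sub_self, inner_zero_right]
  -- convexity of the constraint sets
  have hRconv : ∀ n, Convex ℝ (Hset x₀ (x n) ∩ Hset (x n) (xh n)) :=
    fun n => (hs_convex _ _ _).inter (hs_convex _ _ _)
  -- Fact C
  have factC : ∀ z, (0:X) ∈ M z → ∀ n, ⟪z - x n, x₀ - x n⟫ ≤ 0 := by
    intro z hz n
    induction n with
    | zero => rw [hx0, sub_self, inner_zero_right]
    | succ n ih =>
      exact proj_vi (hRconv n) (hQ n).1 (hQ n).2 z ⟨ih, factB z hz n⟩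
  -- Fact D
  have factD : ∀ n, ‖x₀ - x n‖^2 + ‖x (n+1) - x n‖^2 ≤ ‖x₀ - x (n+1)‖^2 := by
    intro n
    have h := (hQ n).1.1
    have h' : ⟪x (n+1) - x n, x₀ - x n⟫ ≤ 0 := h
    have e1 : x₀ - x (n+1) = (x₀ - x n) - (x (n+1) - x n) := by abel
    rw [e1, norm_sub_sq_real (x₀ - x n) (x (n+1) - x n)]
    have := real_inner_comm (x₀ - x n) (x (n+1) - x n)
    linarith
  -- Fact E
  have factE : ∀ z, (0:X) ∈ M z → ∀ n, ‖x₀ - x n‖ ≤ ‖x₀ - z‖ := by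
    intro z hz n
    cases n with
    | zero => rw [hx0, sub_self, norm_zero]; exact norm_nonneg _
    | succ n => exact (hQ n).2 z ⟨factC z hz n, factB z hz n⟩
  -- Fact F
  have factF : ∀ n, ‖xh n - x n‖^2 ≤ ‖x (n+1) - x n‖^2 := by
    intro n
    have h' : ⟪x (n+1) - xh n, x n - xh n⟫ ≤ 0 := (hQ n).1.2
    have e1 : x (n+1) - x n = (x (n+1) - xh n) - (x n - xh n) := by abel
    have e2 : ‖xh n - x n‖ = ‖x n - xh n‖ := norm_sub_rev _ _
    rw [e2, e1, norm_sub_sq_real (x (n+1) - xh n) (x n - xh n)]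
    nlinarith [sq_nonneg ‖x (n+1) - xh n‖]
  -- partial sums bound
  have hpartial : ∀ n, ∑ i ∈ Finset.range n, ‖x (i+1) - x i‖^2 ≤ ‖x₀ - x n‖^2 := by
    intro n
    induction n with
    | zero => simp
    | succ n ih =>
      rw [Finset.sum_range_succ]
      linarith [factD n]
  have hsum1 : Summable (fun n => ‖x (n+1) - x n‖^2) := by
    apply summable_of_sum_range_le (c := ‖x₀ - z0‖^2) (fun n => sq_nonneg _)
    intro n
    refine (hpartial n).trans ?_
    exact pow_le_pow_left₀ (norm_nonneg _) (factE z0 hz0 n) 2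
  have hsum2 : Summable (fun n => ‖xh n - x n‖^2) :=
    Summable.of_nonneg_of_le (fun n => sq_nonneg _) factF hsum1
  refine ⟨⟨hsum1, hsum2⟩, ?_⟩
  intro h1 h2
  have hKey : ∀ n, K n (xt n) - K n (y n) = γ n • ystar n := fun n => by
    rw [hystar n, smul_inv_smul₀ (hγpos n).ne']
  set a : ℕ → ℝ := fun n => ⟪xt n - y n, nrmz (ystar n)⟫ with haDef
  have hfeq : (fun n => ⟪xt n - y n, nrmz (K n (xt n) - K n (y n))⟫) = a := by
    funext n; rw [hKey n, nrmz_pos_smul (ystar n) (γ n) (hγpos n)]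
  have hips : ∀ n, 0 ≤ ⟪xt n - y n, ystar n⟫ := by
    intro n; rw [hystar n, real_inner_smul_right]
    exact mul_nonneg (inv_nonneg.mpr (hγpos n).le) (hKmono n (xt n) (y n))
  have hann : ∀ n, 0 ≤ a n := by
    intro n; by_cases h0 : ystar n = 0
    · simp [haDef, h0, nrmz]
    · simp only [haDef, nrmz, if_neg h0, real_inner_smul_right]
      exact mul_nonneg (inv_nonneg.mpr (norm_nonneg _)) (hips n)
  have hform : ∀ n, ⟪xt n - y n, ystar n⟫ = a n * ‖ystar n‖ := by
    intro n; by_cases h0 : ystar n = 0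
    · simp [haDef, h0]
    · have hpos : (0:ℝ) < ‖ystar n‖ := norm_pos_iff.mpr h0
      simp only [haDef, nrmz, if_neg h0, real_inner_smul_right]
      field_simp
  -- G : ⟪x n - y n, ystar n⟫ ≤ ‖xh n - x n‖ * ‖ystar n‖
  have hG : ∀ n, ⟪x n - y n, ystar n⟫ ≤ ‖xh n - x n‖ * ‖ystar n‖ := by
    intro n
    have hneg : ⟪x n - y n, ystar n⟫ = -⟪y n - x n, ystar n⟫ := by
      rw [show x n - y n = -(y n - x n) by abel, inner_neg_left]
    by_cases hc : ⟪y n - x n, ystar n⟫ < 0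
    · have hys : ystar n ≠ 0 := by
        intro h0; rw [h0, inner_zero_right] at hc; exact lt_irrefl 0 hc
      have hns : (0:ℝ) < ‖ystar n‖^2 := by have := norm_pos_iff.mpr hys; positivity
      set c := ⟪y n - x n, ystar n⟫ with hcc
      set lam := c / ‖ystar n‖^2 with hlam
      have hxhn : xh n - x n = lam • ystar n := by rw [hxh n, if_pos hc]; abel
      have hlneg : lam < 0 := div_neg_of_neg_of_pos hc hns
      have : ‖xh n - x n‖ * ‖ystar n‖ = -c := by
        rw [hxhn, norm_smul, Real.norm_eq_abs, abs_of_neg hlneg]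
        rw [mul_assoc, ← sq]
        rw [hlam]; field_simp
      rw [this, hneg]
    · push_neg at hc
      rw [hneg]
      exact le_trans (by linarith) (mul_nonneg (norm_nonneg _) (norm_nonneg _))
  have hub' : ∀ n, a n ≤ ‖xt n - x n‖ + ‖xh n - x n‖ := by
    intro n
    by_cases h0 : ystar n = 0
    · have hz : a n = 0 := by simp [haDef, h0, nrmz]
      rw [hz]; exact add_nonneg (norm_nonneg _) (norm_nonneg _)
    · have hpos : (0:ℝ) < ‖ystar n‖ := norm_pos_iff.mpr h0
      have hsplit : ⟪xt n - y n, ystar n⟫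
          = ⟪xt n - x n, ystar n⟫ + ⟪x n - y n, ystar n⟫ := by
        rw [show xt n - y n = (xt n - x n) + (x n - y n) by abel, inner_add_left]
      have hb : a n * ‖ystar n‖ ≤ (‖xt n - x n‖ + ‖xh n - x n‖) * ‖ystar n‖ := by
        rw [← hform n, hsplit, add_mul]
        exact add_le_add (real_inner_le_norm _ _) (hG n)
      exact le_of_mul_le_mul_right hb hpos
  have htxtx : Tendsto (fun n => ‖xt n - x n‖) atTop (𝓝 (0:ℝ)) := by
    simpa using h1.norm
  have htxhx : Tendsto (fun n => ‖xh n - x n‖) atTop (𝓝 (0:ℝ)) := by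
    have hsq := hsum2.tendsto_atTop_zero
    have h' : Tendsto (fun n => Real.sqrt (‖xh n - x n‖^2)) atTop (𝓝 (Real.sqrt 0)) :=
      (Real.continuous_sqrt.tendsto _).comp hsq
    simpa [Real.sqrt_sq (norm_nonneg _)] using h'
  have ha0 : Tendsto a atTop (𝓝 (0:ℝ)) :=
    squeeze_zero hann hub' (by simpa using htxtx.add htxhx)
  obtain ⟨hwk, heto⟩ := h2 (by rw [hfeq]; exact ha0)
  obtain ⟨cγ, hcγ, hcb⟩ := hγinf
  have hysnorm : Tendsto (fun n => ‖ystar n‖) atTop (𝓝 (0:ℝ)) := by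
    apply squeeze_zero (fun n => norm_nonneg _)
      (g := fun n => cγ⁻¹ * ‖K n (xt n) - K n (y n)‖)
    · intro n
      rw [hystar n, norm_smul, Real.norm_eq_abs, abs_of_pos (inv_pos.mpr (hγpos n))]
      exact mul_le_mul_of_nonneg_right
        (inv_anti₀ hcγ (hcb n)) (norm_nonneg _)
    · simpa using (heto.norm.const_mul cγ⁻¹)
  have hxy_weak : ∀ u : X, Tendsto (fun n => ⟪x n - y n, u⟫) atTop (𝓝 (0:ℝ)) := by
    intro u
    have hb : Tendsto (fun n => ⟪x n - xt n, u⟫) atTop (𝓝 (0:ℝ)) := by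
      apply squeeze_zero_norm (a := fun n => ‖xt n - x n‖ * ‖u‖)
      · intro n
        rw [Real.norm_eq_abs]
        refine (abs_real_inner_le_norm _ _).trans ?_
        rw [norm_sub_rev]
      · simpa using htxtx.mul_const ‖u‖
    have := hb.add (hwk u)
    simp only [add_zero] at this
    convert this using 2 with n
    rw [show x n - y n = (x n - xt n) + (xt n - y n) by abel, inner_add_left]
  have hyxs : Tendsto (fun n => ⟪y n - x n, ystar n⟫) atTop (𝓝 (0:ℝ)) := by
    have t1 : Tendsto (fun n => -(a n * ‖ystar n‖)) atTop (𝓝 (0:ℝ)) := by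
      simpa using (ha0.mul hysnorm).neg
    have t2 : Tendsto (fun n => ⟪xt n - x n, ystar n⟫) atTop (𝓝 (0:ℝ)) := by
      apply squeeze_zero_norm (a := fun n => ‖xt n - x n‖ * ‖ystar n‖)
      · intro n; rw [Real.norm_eq_abs]; exact abs_real_inner_le_norm _ _
      · simpa using htxtx.mul hysnorm
    have := t1.add t2
    simp only [add_zero] at this
    convert this using 2 with n
    rw [show y n - x n = -(xt n - y n) + (xt n - x n) by abel, inner_add_left,
      inner_neg_left, hform n]
  -- the limit L of ‖x₀ - x n‖²
  set d : ℕ → ℝ := fun n => ‖x₀ - x n‖^2 with hdDef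
  have hdmono : Monotone d := monotone_nat_of_le_succ (fun n => by
    have := factD n; simp only [hdDef]; nlinarith [sq_nonneg ‖x (n+1) - x n‖])
  have hdbdd : ∀ n, d n ≤ ‖x₀ - z0‖^2 := fun n =>
    pow_le_pow_left₀ (norm_nonneg _) (factE z0 hz0 n) 2
  set L : ℝ := ⨆ n, d n with hLDef
  have hbdda : BddAbove (Set.range d) := ⟨‖x₀ - z0‖^2, by rintro _ ⟨n, rfl⟩; exact hdbdd n⟩
  have hdL : Tendsto d atTop (𝓝 L) := tendsto_atTop_ciSup hdmono hbdda
  have hdleL : ∀ n, d n ≤ L := fun n => le_ciSup hbdda n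
  have hLz : ∀ z, (0:X) ∈ M z → L ≤ ‖x₀ - z‖^2 := fun z hz =>
    ciSup_le (fun n => pow_le_pow_left₀ (norm_nonneg _) (factE z hz n) 2)
  have hL0 : (0:ℝ) ≤ L := le_trans (sq_nonneg _) (hdleL 0)
  -- tail closed convex hulls
  set C : ℕ → Set X := fun n => closure (convexHull ℝ (x '' Set.Ici n)) with hCDef
  have hCmono : ∀ {m n : ℕ}, n ≤ m → C m ⊆ C n := fun {m n} h =>
    closure_mono (convexHull_mono (Set.image_mono (Set.Ici_subset_Ici.mpr h)))
  have hxC : ∀ {m n : ℕ}, n ≤ m → x m ∈ C n := fun {m n} h =>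
    subset_closure (subset_convexHull ℝ _ ⟨m, h, rfl⟩)
  have hCconv : ∀ n, Convex ℝ (C n) := fun n => (convex_convexHull ℝ _).closure
  have hCclosed : ∀ n, IsClosed (C n) := fun n => isClosed_closure
  have hCball : ∀ n, C n ⊆ Metric.closedBall x₀ (Real.sqrt L) := by
    intro n
    apply closure_minimal (convexHull_min ?_ (convex_closedBall _ _)) Metric.isClosed_closedBall
    rintro _ ⟨m, _, rfl⟩
    rw [Metric.mem_closedBall, dist_comm, dist_eq_norm]
    exact Real.le_sqrt_of_sq_le (hdleL m)
  -- the projections of x₀ onto the sets C n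
  have hproj : ∀ n : ℕ, ∃ v, v ∈ C n ∧ ∀ u ∈ C n, ‖x₀ - v‖ ≤ ‖x₀ - u‖ := by
    intro n
    obtain ⟨v, hvC, hveq⟩ := exists_norm_eq_iInf_of_complete_convex
      ⟨x n, hxC le_rfl⟩ (hCclosed n).isComplete (hCconv n) x₀
    refine ⟨v, hvC, fun u hu => ?_⟩
    rw [hveq]
    exact ciInf_le ⟨0, by rintro _ ⟨u', rfl⟩; exact norm_nonneg _⟩ (⟨u, hu⟩ : C n)
  choose v hvC hvmin using hproj
  set r : ℕ → ℝ := fun n => ‖x₀ - v n‖ with hrDef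
  have hrnn : ∀ n, (0:ℝ) ≤ r n := fun n => norm_nonneg _
  have hrmono : Monotone r := fun n m h => hvmin n (v m) (hCmono h (hvC m))
  have hrbdd : ∀ n, r n ≤ Real.sqrt L := fun n =>
    (hvmin n (x n) (hxC le_rfl)).trans (Real.le_sqrt_of_sq_le (hdleL n))
  set ρ : ℝ := ⨆ n, r n with hρDef
  have hrbdda : BddAbove (Set.range r) := ⟨Real.sqrt L, by rintro _ ⟨n, rfl⟩; exact hrbdd n⟩
  have hrρ : Tendsto r atTop (𝓝 ρ) := tendsto_atTop_ciSup hrmono hrbdda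
  have hrleρ : ∀ n, r n ≤ ρ := fun n => le_ciSup hrbdda n
  -- the sequence of projections is Cauchy
  have hpar : ∀ N n m : ℕ, N ≤ n → N ≤ m → dist (v n) (v m)^2 ≤ 4*(ρ^2 - r N^2) := by
    intro N n m hn hm
    have hvnC : v n ∈ C N := hCmono hn (hvC n)
    have hvmC : v m ∈ C N := hCmono hm (hvC m)
    have hmid : (1/2 : ℝ) • v n + (1/2 : ℝ) • v m ∈ C N :=
      hCconv N hvnC hvmC (by norm_num) (by norm_num) (by norm_num)
    have hrN : r N ≤ ‖x₀ - ((1/2:ℝ) • v n + (1/2:ℝ) • v m)‖ := hvmin N _ hmid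
    have hpl := parallelogram_law_with_norm ℝ (x₀ - v n) (x₀ - v m)
    have e1 : (x₀ - v n) + (x₀ - v m) = (2:ℝ) • (x₀ - ((1/2:ℝ) • v n + (1/2:ℝ) • v m)) := by
      rw [smul_sub, smul_add]; module
    have e2 : (x₀ - v n) - (x₀ - v m) = v m - v n := by abel
    have hn2 : ‖(2:ℝ)‖ = 2 := by norm_num
    rw [e1, e2, norm_smul, hn2] at hpl
    have hd : dist (v n) (v m) = ‖v m - v n‖ := by rw [dist_comm, dist_eq_norm]
    rw [hd]
    have b1 : r N^2 ≤ ‖x₀ - ((1/2:ℝ) • v n + (1/2:ℝ) • v m)‖^2 :=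
      pow_le_pow_left₀ (hrnn N) hrN 2
    have b2 : ‖x₀ - v n‖^2 ≤ ρ^2 := pow_le_pow_left₀ (norm_nonneg _) ((hvmin n _ (hvC n)).trans (hrleρ n)) 2
    have b3 : ‖x₀ - v m‖^2 ≤ ρ^2 := pow_le_pow_left₀ (norm_nonneg _) ((hvmin m _ (hvC m)).trans (hrleρ m)) 2
    nlinarith
  have hcauchy : CauchySeq v := by
    apply cauchySeq_of_le_tendsto_0 (fun N => 2 * Real.sqrt (ρ^2 - r N^2))
    · intro n m N hn hm
      calc dist (v n) (v m) = Real.sqrt (dist (v n) (v m)^2) :=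
            (Real.sqrt_sq dist_nonneg).symm
        _ ≤ Real.sqrt (4*(ρ^2 - r N^2)) := Real.sqrt_le_sqrt (hpar N n m hn hm)
        _ = 2 * Real.sqrt (ρ^2 - r N^2) := by
            rw [show (4:ℝ)*(ρ^2 - r N^2) = 2^2*(ρ^2 - r N^2) by ring,
              Real.sqrt_mul (by positivity), Real.sqrt_sq (by norm_num)]
    · have ht : Tendsto (fun N => ρ^2 - r N^2) atTop (𝓝 0) := by
        have := tendsto_const_nhds (x := ρ^2) (f := atTop (α := ℕ))
        simpa using this.sub (hrρ.pow 2)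
      have := (Real.continuous_sqrt.tendsto 0).comp ht
      simpa using this.const_mul 2
  obtain ⟨w, hwlim⟩ := cauchySeq_tendsto_of_complete hcauchy
  have hwC : ∀ n, w ∈ C n := fun n =>
    (hCclosed n).mem_of_tendsto hwlim (eventually_atTop.mpr ⟨n, fun m hm => hCmono hm (hvC m)⟩)
  -- every graph point gives a nonpositive inner product at w
  have hkey : ∀ p u, u ∈ M p → ⟪w - p, u⟫ ≤ 0 := by
    intro p u hu
    have hyps : ∀ n, ⟪x n - p, u⟫
        ≤ ⟪x n - y n, u⟫ + ⟪y n - x n, ystar n⟫ + ⟪x n - p, ystar n⟫ := by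
      intro n
      have hmon := hMmono (y n) p _ u (hy n) hu
      rw [← hystar n] at hmon
      have e1 : ⟪y n - p, ystar n - u⟫ = ⟪y n - p, ystar n⟫ - ⟪y n - p, u⟫ :=
        inner_sub_right _ _ _
      have e2 : ⟪x n - p, u⟫ = ⟪x n - y n, u⟫ + ⟪y n - p, u⟫ := by
        rw [show x n - p = (x n - y n) + (y n - p) by abel, inner_add_left]
      have e3 : ⟪y n - p, ystar n⟫ = ⟪y n - x n, ystar n⟫ + ⟪x n - p, ystar n⟫ := by
        rw [show y n - p = (y n - x n) + (x n - p) by abel, inner_add_left]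
      linarith
    have hxp : Tendsto (fun n => ⟪x n - p, ystar n⟫) atTop (𝓝 (0:ℝ)) := by
      apply squeeze_zero_norm (a := fun n => (‖x₀ - z0‖ + ‖x₀ - p‖) * ‖ystar n‖)
      · intro n
        rw [Real.norm_eq_abs]
        refine (abs_real_inner_le_norm _ _).trans
          (mul_le_mul_of_nonneg_right ?_ (norm_nonneg _))
        calc ‖x n - p‖ = ‖(x n - x₀) + (x₀ - p)‖ := by rw [show x n - p = (x n - x₀) + (x₀ - p) by abel]
          _ ≤ ‖x n - x₀‖ + ‖x₀ - p‖ := norm_add_le _ _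
          _ ≤ ‖x₀ - z0‖ + ‖x₀ - p‖ := by
              rw [norm_sub_rev]; exact add_le_add_left (factE z0 hz0 n) _
      · simpa using hysnorm.const_mul (‖x₀ - z0‖ + ‖x₀ - p‖)
    have hη : Tendsto (fun n => ⟪x n - y n, u⟫ + ⟪y n - x n, ystar n⟫ + ⟪x n - p, ystar n⟫)
        atTop (𝓝 (0:ℝ)) := by
      simpa using ((hxy_weak u).add hyxs).add hxp
    have hfinal : ∀ ε > (0:ℝ), ⟪w - p, u⟫ ≤ 0 + ε := by
      intro ε hε
      obtain ⟨N, hN⟩ := Metric.tendsto_atTop.mp hη ε hε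
      have hsub : C N ⊆ {v' : X | ⟪v' - p, u⟫ ≤ ε} := by
        apply closure_minimal (convexHull_min ?_ (hs_convex u p ε)) (hs_closed u p ε)
        rintro _ ⟨m, hm, rfl⟩
        have h5 := hN m hm
        rw [Real.dist_eq, sub_zero] at h5
        exact le_of_lt (lt_of_le_of_lt (hyps m) (lt_of_abs_lt h5))
      rw [zero_add]
      exact hsub (hwC N)
    exact le_of_forall_pos_le_add (by simpa using fun ε hε => hfinal ε hε)
  -- maximality gives 0 ∈ M w
  have hMw : (0:X) ∈ M w := by
    set A : X → Set X := fun q => M q ∪ {v' | q = w ∧ v' = 0} with hADef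
    have hAmono : ∀ x' y' u' v', u' ∈ A x' → v' ∈ A y' → (0:ℝ) ≤ ⟪x' - y', u' - v'⟫ := by
      intro x' y' u' v' hu' hv'
      rcases hu' with hu' | ⟨hxw', hu0'⟩ <;> rcases hv' with hv' | ⟨hyw', hv0'⟩
      · exact hMmono _ _ _ _ hu' hv'
      · rw [hyw', hv0', sub_zero]
        have h6 := hkey x' u' hu'
        have e : ⟪x' - w, u'⟫ = -⟪w - x', u'⟫ := by
          rw [show x' - w = -(w - x') by abel, inner_neg_left]
        linarith
      · rw [hxw', hu0', zero_sub, inner_neg_right]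
        have h6 := hkey y' v' hv'
        linarith
      · rw [hxw', hu0', hyw', hv0']
        simp
    exact hMmax A hAmono (fun q => Set.subset_union_left) w (Or.inr ⟨rfl, rfl⟩)
  -- conclusion
  have hwL : ‖x₀ - w‖^2 ≤ L := by
    have h7 := hCball 0 (hwC 0)
    rw [Metric.mem_closedBall, dist_comm, dist_eq_norm] at h7
    calc ‖x₀ - w‖^2 ≤ (Real.sqrt L)^2 := pow_le_pow_left₀ (norm_nonneg _) h7 2
      _ = L := Real.sq_sqrt hL0
  have hxw : ∀ n, ‖x n - w‖^2 ≤ L - d n := by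
    intro n
    have hC := factC w hMw n
    have e1 : x n - w = (x₀ - w) - (x₀ - x n) := by abel
    rw [e1, norm_sub_sq_real (x₀ - w) (x₀ - x n)]
    have e2 : ⟪x₀ - w, x₀ - x n⟫ = ⟪x₀ - x n, x₀ - x n⟫ - ⟪w - x n, x₀ - x n⟫ := by
      rw [← inner_sub_left]; congr 1; abel
    rw [real_inner_self_eq_norm_sq] at e2
    have hdn : d n = ‖x₀ - x n‖^2 := rfl
    nlinarith [hdleL n]
  have hxw0 : Tendsto (fun n => ‖x n - w‖^2) atTop (𝓝 (0:ℝ)) := by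
    apply squeeze_zero (fun n => sq_nonneg _) hxw
    simpa using (tendsto_const_nhds (x := L) (f := atTop (α := ℕ))).sub hdL
  have hxwn : Tendsto (fun n => ‖x n - w‖) atTop (𝓝 (0:ℝ)) := by
    have h' : Tendsto (fun n => Real.sqrt (‖x n - w‖^2)) atTop (𝓝 (Real.sqrt 0)) :=
      (Real.continuous_sqrt.tendsto _).comp hxw0
    simpa [Real.sqrt_sq (norm_nonneg _)] using h'
  have hxlim : Tendsto x atTop (𝓝 w) := by
    rw [← tendsto_sub_nhds_zero_iff]
    exact tendsto_zero_iff_norm_tendsto_zero.mpr hxwn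
  refine ⟨w, hMw, ?_, hxlim⟩
  intro z' hz'
  have h8 : ‖x₀ - w‖^2 ≤ ‖x₀ - z'‖^2 := hwL.trans (hLz z' hz')
  nlinarith [norm_nonneg (x₀ - w), norm_nonneg (x₀ - z')]
end

section
/- Let X be a real Hilbert space, let M : X → 2^X be a maximally monotone operator with Z = zer M ≠ ∅, let x₀ ∈ X, let ε ∈ (0,1), let (λ_n) be a sequence in [ε, 2−ε], and let (y_n, y_n*) be a sequence in gra M. Define x_{n+1} = x_n + λ_n (⟪y_n − x_n, y_n*⟫/‖y_n*‖²) y_n* if ⟪y_n − x_n, y_n*⟫ < 0, and x_{n+1} = x_n otherwise. Then: (i) Σ_{n∈ℕ} ‖x_{n+1} − x_n‖² < ∞; (ii) if every weak sequential cluster point of (x_n) belongs to Z, then (x_n) converges weakly to a point in Z. -/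
open Filter Topology RealInnerProductSpace


lemma scalar_key (ε l c m s2 : ℝ) (hε0 : 0 < ε) (hε1 : ε < 1)
    (h1 : ε ≤ l) (h2 : l ≤ 2 - ε) (hc : c < 0) (hm : 0 ≤ m) (hs : 0 < s2) :
    ε / (2 - ε) * ((l * c / s2) ^ 2 * s2)
      ≤ -(2 * ((l * c / s2) * (-c + m)) + (l * c / s2) ^ 2 * s2) := by
  have h2ε : 0 < 2 - ε := by linarith
  have hl0 : 0 < l := lt_of_lt_of_le hε0 h1
  have core : ε * (l ^ 2 * c ^ 2) ≤ (-(2 * (l * c * (-c + m)) + l ^ 2 * c ^ 2)) * (2 - ε) := by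
    nlinarith [mul_nonneg (mul_nonneg hl0.le (mul_self_nonneg c)) (by linarith : (0:ℝ) ≤ 2 - ε - l),
      mul_nonneg (mul_nonneg (mul_nonneg h2ε.le hl0.le) (neg_nonneg.2 hc.le)) hm]
  have e1 : ε / (2 - ε) * ((l * c / s2) ^ 2 * s2) = ε * (l ^ 2 * c ^ 2) / ((2 - ε) * s2) := by
    field_simp
  have e2 : -(2 * ((l * c / s2) * (-c + m)) + (l * c / s2) ^ 2 * s2)
      = (-(2 * (l * c * (-c + m)) + l ^ 2 * c ^ 2)) * (2 - ε) / ((2 - ε) * s2) := by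
    field_simp
  rw [e1, e2]
  exact div_le_div_of_nonneg_right core (mul_pos h2ε hs).le

lemma weak_cpt {X : Type*} [NormedAddCommGroup X] [InnerProductSpace ℝ X] [CompleteSpace X]
    (v : ℕ → X) (R : ℝ) (hv : ∀ n, ‖v n‖ ≤ R) :
    ∃ (z : X) (φ : ℕ → ℕ), StrictMono φ ∧
      ∀ u : X, Tendsto (fun n => ⟪v (φ n), u⟫) atTop (𝓝 ⟪z, u⟫) := by
  have hR : 0 ≤ R := (norm_nonneg (v 0)).trans (hv 0)
  -- compactness extraction
  set S : ℕ → (ℕ → ℝ) := fun n m => ⟪v n, v m⟫ with hS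
  set K : Set (ℕ → ℝ) := Set.univ.pi fun m => Set.Icc (-(R * ‖v m‖)) (R * ‖v m‖) with hKdef
  have hK : IsCompact K := isCompact_univ_pi fun m => isCompact_Icc
  have hSK : ∀ n, S n ∈ K := by
    intro n
    intro m _
    have h1 : |⟪v n, v m⟫| ≤ ‖v n‖ * ‖v m‖ := abs_real_inner_le_norm _ _
    have h2 : ‖v n‖ * ‖v m‖ ≤ R * ‖v m‖ :=
      mul_le_mul_of_nonneg_right (hv n) (norm_nonneg _)
    exact abs_le.mp (h1.trans h2)
  obtain ⟨L, -, φ, hφ, hconv⟩ := hK.tendsto_subseq hSK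
  have hpt : ∀ m, Tendsto (fun n => ⟪v (φ n), v m⟫) atTop (𝓝 (L m)) := by
    intro m
    exact (tendsto_pi_nhds.mp hconv) m
  -- convergence on the span
  have hspan : ∀ u ∈ Submodule.span ℝ (Set.range v),
      ∃ l : ℝ, Tendsto (fun n => ⟪v (φ n), u⟫) atTop (𝓝 l) := by
    intro u hu
    induction hu using Submodule.span_induction with
    | mem w hw =>
      obtain ⟨m, rfl⟩ := hw
      exact ⟨L m, hpt m⟩
    | zero => exact ⟨0, by simpa using tendsto_const_nhds⟩
    | add a b _ _ ha hb =>
      obtain ⟨la, hla⟩ := ha; obtain ⟨lb, hlb⟩ := hb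
      exact ⟨la + lb, by simpa [inner_add_right] using hla.add hlb⟩
    | smul r a _ ha =>
      obtain ⟨la, hla⟩ := ha
      exact ⟨r * la, by simpa [real_inner_smul_right] using hla.const_mul r⟩
  -- convergence on the closure of the span
  have hclos : ∀ u ∈ closure ((Submodule.span ℝ (Set.range v) : Submodule ℝ X) : Set X),
      ∃ l : ℝ, Tendsto (fun n => ⟪v (φ n), u⟫) atTop (𝓝 l) := by
    intro u hu
    have hcauchy : CauchySeq (fun n => ⟪v (φ n), u⟫) := by
      rw [Metric.cauchySeq_iff]
      intro δ hδ
      obtain ⟨w, hw, hwu⟩ := Metric.mem_closure_iff.mp hu (δ / (3 * (R + 1))) (by positivity)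
      obtain ⟨l, hl⟩ := hspan w hw
      have hcw : CauchySeq (fun n => ⟪v (φ n), w⟫) := hl.cauchySeq
      obtain ⟨N, hN⟩ := Metric.cauchySeq_iff.mp hcw (δ / 3) (by positivity)
      refine ⟨N, fun p hp q hq => ?_⟩
      have hb : ∀ n : ℕ, |⟪v (φ n), u⟫ - ⟪v (φ n), w⟫| ≤ R * (δ / (3 * (R + 1))) := by
        intro n
        rw [← inner_sub_right]
        refine (abs_real_inner_le_norm _ _).trans ?_
        have := dist_eq_norm u w ▸ hwu
        exact mul_le_mul (hv _) (by linarith [this]) (norm_nonneg _) hR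
      have hRd : R * (δ / (3 * (R + 1))) ≤ δ / 3 := by
        have h1 : (0:ℝ) < 3 * (R + 1) := by positivity
        rw [← mul_div_assoc, div_le_div_iff₀ h1 (by norm_num : (0:ℝ) < 3)]
        nlinarith
      have h3 := hN p hp q hq
      rw [Real.dist_eq] at h3 ⊢
      have e1 := hb p; have e2 := hb q
      calc |⟪v (φ p), u⟫ - ⟪v (φ q), u⟫|
          ≤ |⟪v (φ p), u⟫ - ⟪v (φ p), w⟫| + |⟪v (φ p), w⟫ - ⟪v (φ q), w⟫|
            + |⟪v (φ q), w⟫ - ⟪v (φ q), u⟫| := by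
            have := abs_sub_le (⟪v (φ p), u⟫) (⟪v (φ p), w⟫) (⟪v (φ q), u⟫)
            have := abs_sub_le (⟪v (φ p), w⟫) (⟪v (φ q), w⟫) (⟪v (φ q), u⟫)
            linarith [abs_sub_le (⟪v (φ p), u⟫) (⟪v (φ p), w⟫) (⟪v (φ q), u⟫),
              abs_sub_le (⟪v (φ p), w⟫) (⟪v (φ q), w⟫) (⟪v (φ q), u⟫)]
        _ < δ := by
            rw [abs_sub_comm (⟪v (φ q), w⟫)] at *
            linarith [e1, e2, h3, hRd]
    exact cauchySeq_tendsto_of_complete hcauchy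
  -- all directions converge, via orthogonal projection
  set Y : Submodule ℝ X := (Submodule.span ℝ (Set.range v)).topologicalClosure with hYdef
  have hYclosed : IsClosed (Y : Set X) := Submodule.isClosed_topologicalClosure _
  haveI : CompleteSpace Y := hYclosed.completeSpace_coe
  have hvY : ∀ n, v n ∈ Y :=
    fun n => Submodule.le_topologicalClosure _ (Submodule.subset_span ⟨n, rfl⟩)
  have hconv_all : ∀ u : X, ∃ l : ℝ, Tendsto (fun n => ⟪v (φ n), u⟫) atTop (𝓝 l) := by
    intro u
    set P : X := (Y.orthogonalProjection u : X) with hPdef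
    have hPmem : P ∈ closure ((Submodule.span ℝ (Set.range v) : Submodule ℝ X) : Set X) := by
      rw [← Submodule.topologicalClosure_coe]
      exact SetLike.mem_coe.mpr (Y.orthogonalProjection u).2
    obtain ⟨l, hl⟩ := hclos P hPmem
    refine ⟨l, hl.congr fun n => ?_⟩
    have horth : u - P ∈ Yᗮ := Submodule.sub_starProjection_mem_orthogonal (K := Y) u
    have h0 : ⟪v (φ n), u - P⟫ = 0 := horth (v (φ n)) (hvY _)
    have : ⟪v (φ n), u⟫ = ⟪v (φ n), P⟫ + ⟪v (φ n), u - P⟫ := by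
      rw [inner_sub_right]; ring
    rw [this, h0, add_zero]
  -- build the weak limit via Riesz representation
  choose f hf using hconv_all
  have hadd : ∀ u w : X, f (u + w) = f u + f w := by
    intro u w
    refine tendsto_nhds_unique (hf (u + w)) ?_
    simpa [inner_add_right] using (hf u).add (hf w)
  have hsmul : ∀ (r : ℝ) (u : X), f (r • u) = r * f u := by
    intro r u
    refine tendsto_nhds_unique (hf (r • u)) ?_
    simpa [real_inner_smul_right] using (hf u).const_mul r
  have hbound : ∀ u : X, ‖f u‖ ≤ R * ‖u‖ := by
    intro u
    rw [Real.norm_eq_abs]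
    refine le_of_tendsto (hf u).abs (Eventually.of_forall fun n => ?_)
    exact (abs_real_inner_le_norm _ _).trans
      (mul_le_mul_of_nonneg_right (hv _) (norm_nonneg _))
  let F : X →L[ℝ] ℝ := LinearMap.mkContinuous
    { toFun := f, map_add' := hadd, map_smul' := hsmul } R hbound
  refine ⟨(InnerProductSpace.toDual ℝ X).symm F, φ, hφ, fun u => ?_⟩
  have : ⟪(InnerProductSpace.toDual ℝ X).symm F, u⟫ = F u :=
    InnerProductSpace.toDual_symm_apply
  rw [this]
  exact hf u

/-- Proposition 4.1 (abstract weak convergence principle). -/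
theorem stmt_2
    {X : Type*} [NormedAddCommGroup X] [InnerProductSpace ℝ X] [CompleteSpace X]
    (M : X → Set X)
    (hMmono : ∀ x y u v, u ∈ M x → v ∈ M y → (0:ℝ) ≤ ⟪x - y, u - v⟫)
    (hMmax : ∀ A : X → Set X,
      (∀ x y u v, u ∈ A x → v ∈ A y → (0:ℝ) ≤ ⟪x - y, u - v⟫) →
      (∀ x, M x ⊆ A x) → ∀ x, A x ⊆ M x)
    (hZ : ∃ z, (0:X) ∈ M z)
    (x₀ : X) (ε : ℝ) (hε : ε ∈ Set.Ioo (0:ℝ) 1)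
    (lam : ℕ → ℝ) (hlam : ∀ n, lam n ∈ Set.Icc ε (2 - ε))
    (y ystar x : ℕ → X)
    (hgra : ∀ n, ystar n ∈ M (y n))
    (hx0 : x 0 = x₀)
    (hxrec : ∀ n, x (n + 1) =
      if ⟪y n - x n, ystar n⟫ < 0 then
        x n + ((lam n * ⟪y n - x n, ystar n⟫) / ‖ystar n‖ ^ 2) • ystar n
      else x n) :
    Summable (fun n => ‖x (n + 1) - x n‖ ^ 2) ∧
    ((∀ (z : X) (φ : ℕ → ℕ), StrictMono φ →
        (∀ u : X, Tendsto (fun n => ⟪x (φ n), u⟫) atTop (𝓝 ⟪z, u⟫)) → (0:X) ∈ M z) →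
      ∃ z, (0:X) ∈ M z ∧ ∀ u : X, Tendsto (fun n => ⟪x n, u⟫) atTop (𝓝 ⟪z, u⟫)) := by
  obtain ⟨hε0, hε1⟩ := hε
  have h2ε : (0:ℝ) < 2 - ε := by linarith
  have hα : 0 < ε / (2 - ε) := div_pos hε0 h2ε
  -- key Fejér inequality
  have hkey : ∀ w, (0:X) ∈ M w → ∀ n,
      ε / (2 - ε) * ‖x (n + 1) - x n‖ ^ 2 ≤ ‖x n - w‖ ^ 2 - ‖x (n + 1) - w‖ ^ 2 := by
    intro w hw n
    by_cases hc : ⟪y n - x n, ystar n⟫ < 0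
    · have hxn1 : x (n + 1) = x n +
          ((lam n * ⟪y n - x n, ystar n⟫) / ‖ystar n‖ ^ 2) • ystar n := by
        rw [hxrec n, if_pos hc]
      have hys : ystar n ≠ 0 := by
        intro h; rw [h] at hc; simp at hc
      have hs2 : (0:ℝ) < ‖ystar n‖ ^ 2 :=
        pow_pos (norm_pos_iff.mpr hys) 2
      have hm : (0:ℝ) ≤ ⟪y n - w, ystar n⟫ := by
        simpa using hMmono (y n) w (ystar n) 0 (hgra n) hw
      have hinner : ⟪x n - w, ystar n⟫ = -⟪y n - x n, ystar n⟫ + ⟪y n - w, ystar n⟫ := by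
        simp only [inner_sub_left]; ring
      have hdiff : x (n + 1) - x n
          = ((lam n * ⟪y n - x n, ystar n⟫) / ‖ystar n‖ ^ 2) • ystar n := by
        rw [hxn1]; abel
      have hxw : x (n + 1) - w
          = (x n - w) + ((lam n * ⟪y n - x n, ystar n⟫) / ‖ystar n‖ ^ 2) • ystar n := by
        rw [hxn1]; abel
      have hnorm : ∀ t : ℝ, ‖t • ystar n‖ ^ 2 = t ^ 2 * ‖ystar n‖ ^ 2 := by
        intro t; rw [norm_smul, mul_pow, Real.norm_eq_abs, sq_abs]
      rw [hdiff, hxw, norm_add_sq_real, real_inner_smul_right, hinner, hnorm]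
      have := scalar_key ε (lam n) (⟪y n - x n, ystar n⟫) (⟪y n - w, ystar n⟫)
        (‖ystar n‖ ^ 2) hε0 hε1 (hlam n).1 (hlam n).2 hc hm hs2
      linarith
    · rw [hxrec n, if_neg hc]
      simp
  obtain ⟨z₀, hz₀⟩ := hZ
  -- part (i): summability
  have htel : ∀ n, (ε / (2 - ε)) * ∑ i ∈ Finset.range n, ‖x (i + 1) - x i‖ ^ 2
      ≤ ‖x 0 - z₀‖ ^ 2 - ‖x n - z₀‖ ^ 2 := by
    intro n
    induction n with
    | zero => simp
    | succ n ih =>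
      rw [Finset.sum_range_succ, mul_add]
      have := hkey z₀ hz₀ n
      linarith
  have hsummable : Summable (fun n => ‖x (n + 1) - x n‖ ^ 2) := by
    apply summable_of_sum_range_le (c := ‖x 0 - z₀‖ ^ 2 / (ε / (2 - ε)))
      (fun n => by positivity)
    intro n
    rw [le_div_iff₀ hα]
    nlinarith [htel n, sq_nonneg ‖x n - z₀‖]
  refine ⟨hsummable, ?_⟩
  -- part (ii)
  intro H
  have hanti : ∀ w, (0:X) ∈ M w → Antitone (fun n => ‖x n - w‖ ^ 2) := by
    intro w hw
    apply antitone_nat_of_succ_le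
    intro n
    have h1 := hkey w hw n
    have h2 := mul_nonneg hα.le (sq_nonneg ‖x (n + 1) - x n‖)
    linarith
  have hlim : ∀ w, (0:X) ∈ M w →
      ∃ A, Tendsto (fun n => ‖x n - w‖ ^ 2) atTop (𝓝 A) := by
    intro w hw
    exact ⟨_, tendsto_atTop_ciInf (hanti w hw) ⟨0, by rintro a ⟨n, rfl⟩; positivity⟩⟩
  set R : ℝ := ‖x 0 - z₀‖ + ‖z₀‖ with hRdef
  have hbdd : ∀ n, ‖x n‖ ≤ R := by
    intro n
    have h1 : ‖x n - z₀‖ ^ 2 ≤ ‖x 0 - z₀‖ ^ 2 := hanti z₀ hz₀ (Nat.zero_le n)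
    have h2 : ‖x n - z₀‖ ≤ ‖x 0 - z₀‖ := by
      nlinarith [norm_nonneg (x n - z₀), norm_nonneg (x 0 - z₀)]
    calc ‖x n‖ = ‖(x n - z₀) + z₀‖ := by rw [sub_add_cancel]
      _ ≤ ‖x n - z₀‖ + ‖z₀‖ := norm_add_le _ _
      _ ≤ R := by rw [hRdef]; linarith
  obtain ⟨p, φ, hφ, hφw⟩ := weak_cpt x R hbdd
  have hpZ : (0:X) ∈ M p := H p φ hφ hφw
  -- uniqueness of weak cluster points in Z
  have huniq : ∀ (q : X) (ρ : ℕ → ℕ), StrictMono ρ → (0:X) ∈ M q →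
      (∀ u : X, Tendsto (fun n => ⟪x (ρ n), u⟫) atTop (𝓝 ⟪q, u⟫)) → q = p := by
    intro q ρ hρ hqZ hqw
    obtain ⟨Ap, hAp⟩ := hlim p hpZ
    obtain ⟨Aq, hAq⟩ := hlim q hqZ
    have hdiff : ∀ n, ⟪x n, p - q⟫
        = (‖x n - q‖ ^ 2 - ‖x n - p‖ ^ 2 + ‖p‖ ^ 2 - ‖q‖ ^ 2) / 2 := by
      intro n
      have e1 : ‖x n - p‖ ^ 2 = ‖x n‖ ^ 2 - 2 * ⟪x n, p⟫ + ‖p‖ ^ 2 := norm_sub_sq_real _ _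
      have e2 : ‖x n - q‖ ^ 2 = ‖x n‖ ^ 2 - 2 * ⟪x n, q⟫ + ‖q‖ ^ 2 := norm_sub_sq_real _ _
      rw [inner_sub_right]
      linarith
    have hT : Tendsto (fun n => ⟪x n, p - q⟫) atTop
        (𝓝 ((Aq - Ap + ‖p‖ ^ 2 - ‖q‖ ^ 2) / 2)) := by
      simp only [hdiff]
      exact (((hAq.sub hAp).add_const (‖p‖ ^ 2)).sub_const (‖q‖ ^ 2)).div_const 2
    have e1 : ⟪p, p - q⟫ = (Aq - Ap + ‖p‖ ^ 2 - ‖q‖ ^ 2) / 2 :=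
      tendsto_nhds_unique (hφw (p - q)) (hT.comp hφ.tendsto_atTop)
    have e2 : ⟪q, p - q⟫ = (Aq - Ap + ‖p‖ ^ 2 - ‖q‖ ^ 2) / 2 :=
      tendsto_nhds_unique (hqw (p - q)) (hT.comp hρ.tendsto_atTop)
    have h0 : ⟪p - q, p - q⟫ = (0:ℝ) := by
      rw [inner_sub_left, e1, e2]; ring
    have := inner_self_eq_zero.mp h0
    exact (sub_eq_zero.mp this).symm
  refine ⟨p, hpZ, fun u => ?_⟩
  apply tendsto_of_subseq_tendsto
  intro ns hns
  obtain ⟨σ₀, hσ₀, hcomp⟩ := strictMono_subseq_of_tendsto_atTop hns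
  obtain ⟨q, τ, hτ, hqw⟩ := weak_cpt (fun n => x ((ns ∘ σ₀) n)) R (fun n => hbdd _)
  have hρ : StrictMono (fun n => (ns ∘ σ₀) (τ n)) := hcomp.comp hτ
  have hqw' : ∀ u' : X, Tendsto (fun n => ⟪x ((ns ∘ σ₀) (τ n)), u'⟫) atTop (𝓝 ⟪q, u'⟫) :=
    hqw
  have hqZ : (0:X) ∈ M q := H q _ hρ hqw'
  have hqp : q = p := huniq q _ hρ hqZ hqw'
  exact ⟨σ₀ ∘ τ, by simpa [hqp] using hqw' u⟩
end

section
/- Let X be a real Hilbert space, let A : X → 2^X be maximally monotone, and let B : X → X be monotone and β-Lipschitzian with β > 0. Suppose zer(A + B) = {x : 0 ∈ Ax + Bx} ≠ ∅, take x₀ ∈ X, let ε ∈ (0, 1/(β+1)), and let (γ_n) be a sequence in [ε, (1−ε)/β]. Define the iteration (Tseng's forward-backward-forward algorithm): v_n* = γ_n B x_n; y_n = J_{γ_n A}(x_n − v_n*); x_{n+1} = y_n − γ_n B y_n + v_n*, where J_{γA} = (Id + γA)^{-1} is the resolvent. Then (x_n) converges weakly to a point in zer(A + B). -/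
open Filter Topology RealInnerProductSpace


section Aux
variable {X : Type*} [NormedAddCommGroup X] [InnerProductSpace ℝ X]

private noncomputable def tD (a b yy vv : X) : ℝ :=
  ‖a‖^2/2 + ‖b‖^2/2 + ⟪a, vv⟫ + ⟪b, yy⟫ - ⟪yy, vv⟫

private lemma tD_bridge (a b yy vv : X) : tD a b yy vv = ‖a + b‖^2/2 - ⟪a - yy, b - vv⟫ := by
  simp only [tD, ← real_inner_self_eq_norm_sq, inner_add_left, inner_add_right,
    inner_sub_left, inner_sub_right, real_inner_comm a b, real_inner_comm yy b,
    real_inner_comm vv a, real_inner_comm vv yy]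
  ring

private lemma tD_self (yy vv : X) : tD yy vv yy vv = ‖yy + vv‖^2/2 := by
  rw [tD_bridge]; simp

private lemma tD_combo (t : ℝ) (a₁ a₂ b₁ b₂ yy vv : X) :
    tD ((1-t)•a₁ + t•a₂) ((1-t)•b₁ + t•b₂) yy vv
      = (1-t) * tD a₁ b₁ yy vv + t * tD a₂ b₂ yy vv
        - (t*(1-t)/2) * (‖a₁-a₂‖^2 + ‖b₁-b₂‖^2) := by
  simp only [tD, ← real_inner_self_eq_norm_sq, inner_add_left, inner_add_right,
    inner_sub_left, inner_sub_right, real_inner_smul_left, real_inner_smul_right,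
    real_inner_comm a₁ a₂, real_inner_comm b₁ b₂]
  ring

lemma mem_of_related (A : X → Set X)
    (hAmono : ∀ x y u v, u ∈ A x → v ∈ A y → (0:ℝ) ≤ ⟪x - y, u - v⟫)
    (hAmax : ∀ A' : X → Set X,
      (∀ x y u v, u ∈ A' x → v ∈ A' y → (0:ℝ) ≤ ⟪x - y, u - v⟫) →
      (∀ x, A x ⊆ A' x) → ∀ x, A' x ⊆ A x)
    (x₀ u₀ : X) (h : ∀ y v, v ∈ A y → (0:ℝ) ≤ ⟪x₀ - y, u₀ - v⟫) : u₀ ∈ A x₀ := by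
  have hflip : ∀ (p q r s : X), ⟪p - q, r - s⟫ = ⟪q - p, s - r⟫ := by
    intro p q r s
    rw [← neg_sub q p, ← neg_sub s r, inner_neg_neg]
  have hmono : ∀ x y u v, u ∈ (fun w => A w ∪ {u' | w = x₀ ∧ u' = u₀}) x →
      v ∈ (fun w => A w ∪ {u' | w = x₀ ∧ u' = u₀}) y → (0:ℝ) ≤ ⟪x - y, u - v⟫ := by
    intro x y u v hu hv
    rcases hu with hu | ⟨hx, hu⟩ <;> rcases hv with hv | ⟨hy, hv⟩
    · exact hAmono x y u v hu hv
    · subst hy; subst hv; rw [hflip]; exact h x u hu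
    · subst hx; subst hu; exact h y v hv
    · subst hx; subst hu; subst hy; subst hv; simp
  exact hAmax _ hmono (fun x => Set.subset_union_left) x₀ (Or.inr ⟨rfl, rfl⟩)

lemma minty_core [CompleteSpace X] (A : X → Set X)
    (hAmono : ∀ x y u v, u ∈ A x → v ∈ A y → (0:ℝ) ≤ ⟪x - y, u - v⟫)
    (hAmax : ∀ A' : X → Set X,
      (∀ x y u v, u ∈ A' x → v ∈ A' y → (0:ℝ) ≤ ⟪x - y, u - v⟫) →
      (∀ x, A x ⊆ A' x) → ∀ x, A' x ⊆ A x)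
    (hne : ∃ p v, v ∈ A p) : ∃ p, -p ∈ A p := by
  classical
  obtain ⟨p₀, v₀, hp₀⟩ := hne
  have related_mem : ∀ a b : X, (∀ yy vv, vv ∈ A yy → (0:ℝ) ≤ ⟪a - yy, b - vv⟫) → b ∈ A a :=
    fun a b h => mem_of_related A hAmono hAmax a b h
  set C : Set ℝ := {c | ∃ a b : X, ∀ yy vv, vv ∈ A yy → tD a b yy vv ≤ c} with hC
  have hCne : (‖p₀ + v₀‖^2/2) ∈ C := by
    refine ⟨p₀, v₀, fun yy vv hvv => ?_⟩
    rw [tD_bridge]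
    linarith [hAmono p₀ yy v₀ vv hp₀ hvv]
  have hC0 : ∀ c ∈ C, (0:ℝ) ≤ c := by
    rintro c ⟨a, b, hab⟩
    by_cases hrel : ∀ yy vv, vv ∈ A yy → (0:ℝ) ≤ ⟪a - yy, b - vv⟫
    · have hb : b ∈ A a := related_mem a b hrel
      have h1 := hab a b hb
      rw [tD_self] at h1
      nlinarith [sq_nonneg ‖a + b‖]
    · push_neg at hrel
      obtain ⟨yy, vv, hvv, hneg⟩ := hrel
      have h1 := hab yy vv hvv
      rw [tD_bridge] at h1
      nlinarith [sq_nonneg ‖a + b‖]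
  have hbdd : BddBelow C := ⟨0, hC0⟩
  set m : ℝ := sInf C with hm
  have hm0 : (0:ℝ) ≤ m := le_csInf ⟨_, hCne⟩ hC0
  have hmem : ∀ (a' b' : X) (c : ℝ), (∀ yy vv, vv ∈ A yy → tD a' b' yy vv ≤ c) → m ≤ c :=
    fun a' b' c h => csInf_le hbdd ⟨a', b', h⟩
  have hseq : ∀ n : ℕ, ∃ a b : X, ∀ yy vv, vv ∈ A yy → tD a b yy vv ≤ m + 1/(n+1) := by
    intro n
    have hlt : m < m + 1/(n+1) := by
      have : (0:ℝ) < 1/(n+1) := by positivity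
      linarith
    obtain ⟨c, hcC, hclt⟩ := exists_lt_of_csInf_lt ⟨_, hCne⟩ hlt
    obtain ⟨a, b, hab⟩ := hcC
    exact ⟨a, b, fun yy vv hvv => (hab yy vv hvv).trans hclt.le⟩
  choose a b hab using hseq
  have hcest : ∀ n k : ℕ, ‖a n - a k‖^2 + ‖b n - b k‖^2 ≤ 4*(1/(n+1) + 1/(k+1)) := by
    intro n k
    have hadm : ∀ yy vv, vv ∈ A yy →
        tD ((1-(1/2:ℝ))•a n + (1/2:ℝ)•a k) ((1-(1/2:ℝ))•b n + (1/2:ℝ)•b k) yy vv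
          ≤ (m + 1/(n+1))/2 + (m + 1/(k+1))/2
            - (1/8) * (‖a n - a k‖^2 + ‖b n - b k‖^2) := by
      intro yy vv hvv
      rw [tD_combo]
      have h1 := hab n yy vv hvv
      have h2 := hab k yy vv hvv
      nlinarith
    have := hmem _ _ _ hadm
    linarith
  have hcauchy : ∀ (s : ℕ → X), (∀ n k : ℕ, ‖s n - s k‖^2 ≤ 4*(1/(n+1) + 1/(k+1))) →
      CauchySeq s := by
    intro s hs
    rw [Metric.cauchySeq_iff']
    intro ε hε
    obtain ⟨N, hN⟩ := exists_nat_gt (8/ε^2)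
    refine ⟨N, fun n hn => ?_⟩
    have h1 : ‖s n - s N‖^2 ≤ 4*(1/(n+1) + 1/(N+1)) := hs n N
    have hNp : (0:ℝ) < N + 1 := by positivity
    have h2 : (1:ℝ)/(n+1) ≤ 1/(N+1) := by
      apply one_div_le_one_div_of_le hNp
      have := (Nat.cast_le (α := ℝ)).mpr hn
      linarith
    have h4 : (8:ℝ) * (1/(N+1)) < ε^2 := by
      rw [mul_one_div, div_lt_iff₀ hNp]
      rw [div_lt_iff₀ (by positivity : (0:ℝ) < ε^2)] at hN
      nlinarith
    have h5 : ‖s n - s N‖^2 < ε^2 := by linarith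
    rw [dist_eq_norm]
    exact lt_of_pow_lt_pow_left₀ 2 hε.le h5
  obtain ⟨abar, habar⟩ := cauchySeq_tendsto_of_complete
    (hcauchy a (fun n k => by linarith [hcest n k, sq_nonneg ‖b n - b k‖]))
  obtain ⟨bbar, hbbar⟩ := cauchySeq_tendsto_of_complete
    (hcauchy b (fun n k => by linarith [hcest n k, sq_nonneg ‖a n - a k‖]))
  have hone : Tendsto (fun n : ℕ => m + 1/(n+1)) atTop (𝓝 m) := by
    have := tendsto_one_div_add_atTop_nhds_zero_nat (𝕜 := ℝ)
    simpa using tendsto_const_nhds.add this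
  have hl : ∀ yy vv, vv ∈ A yy → tD abar bbar yy vv ≤ m := by
    intro yy vv hvv
    have hdt : Tendsto (fun n => tD (a n) (b n) yy vv) atTop (𝓝 (tD abar bbar yy vv)) := by
      simp only [tD]
      exact ((((habar.norm.pow 2).div_const 2).add ((hbbar.norm.pow 2).div_const 2)).add
        (habar.inner tendsto_const_nhds)).add (hbbar.inner tendsto_const_nhds) |>.sub tendsto_const_nhds
    exact le_of_tendsto_of_tendsto' hdt hone (fun n => hab n yy vv hvv)
  have key : ∀ yy vv, vv ∈ A yy →
      m + (‖yy - abar‖^2 + ‖vv - bbar‖^2)/2 ≤ ‖yy + vv‖^2/2 := by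
    intro yy vv hvv
    set K : ℝ := ‖yy - abar‖^2 + ‖vv - bbar‖^2 with hK
    have hstep : ∀ t : ℝ, 0 < t → t ≤ 1 → m + ((1-t)/2) * K ≤ ‖yy + vv‖^2/2 := by
      intro t ht ht1
      have hadm : ∀ y' v', v' ∈ A y' →
          tD ((1-t)•abar + t•yy) ((1-t)•bbar + t•vv) y' v'
            ≤ (1-t)*m + t*(‖yy + vv‖^2/2) - (t*(1-t)/2)*K := by
        intro y' v' hv'
        rw [tD_combo]
        have h1 := hl y' v' hv'
        have h2 : tD yy vv y' v' ≤ ‖yy + vv‖^2/2 := by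
          rw [tD_bridge]
          linarith [hAmono yy y' vv v' hvv hv']
        have h1' := mul_le_mul_of_nonneg_left h1 (by linarith : (0:ℝ) ≤ 1 - t)
        have h2' := mul_le_mul_of_nonneg_left h2 ht.le
        have hKK : ‖abar - yy‖^2 + ‖bbar - vv‖^2 = K := by
          rw [hK, ← norm_neg (abar - yy), ← norm_neg (bbar - vv), neg_sub, neg_sub]
        rw [hKK]
        linarith
      have hle := hmem _ _ _ hadm
      have h6 : 0 ≤ t * (‖yy + vv‖^2/2 - m - ((1-t)/2)*K) := by nlinarith
      have h7 := nonneg_of_mul_nonneg_right h6 ht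
      linarith
    have htend : Tendsto (fun n : ℕ => m + ((1 - 1/(n+1))/2) * K) atTop (𝓝 (m + ((1-0)/2) * K)) := by
      have h0 : Tendsto (fun n : ℕ => 1/((n:ℝ)+1)) atTop (𝓝 0) := tendsto_one_div_add_atTop_nhds_zero_nat
      exact tendsto_const_nhds.add ((((tendsto_const_nhds.sub h0).div_const 2).mul tendsto_const_nhds))
    have hev : ∀ n : ℕ, m + ((1 - 1/(n+1))/2) * K ≤ ‖yy + vv‖^2/2 := by
      intro n
      have hp : (0:ℝ) < 1/(n+1) := by positivity
      have hp1 : (1:ℝ)/(n+1) ≤ 1 := by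
        rw [div_le_one (by positivity)]
        linarith [Nat.cast_nonneg (α := ℝ) n]
      exact hstep _ hp hp1
    have hfin := le_of_tendsto htend (Filter.Eventually.of_forall hev)
    linarith
  have hrel : ∀ yy vv, vv ∈ A yy → (0:ℝ) ≤ ⟪-bbar - yy, -abar - vv⟫ := by
    intro yy vv hvv
    have h := key yy vv hvv
    have hexp : ⟪-bbar - yy, -abar - vv⟫
        = ‖yy + vv‖^2/2 - (‖yy - abar‖^2 + ‖vv - bbar‖^2)/2 + ‖abar + bbar‖^2/2 := by
      simp only [← real_inner_self_eq_norm_sq, inner_add_left, inner_add_right,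
        inner_sub_left, inner_sub_right, inner_neg_left, inner_neg_right,
        real_inner_comm yy vv, real_inner_comm abar yy, real_inner_comm bbar vv,
        real_inner_comm abar bbar, real_inner_comm bbar yy, real_inner_comm vv abar]
      ring
    rw [hexp]
    nlinarith [sq_nonneg ‖abar + bbar‖]
  have hmem2 : -abar ∈ A (-bbar) := related_mem _ _ hrel
  have h2 := key (-bbar) (-abar) hmem2
  have e1 : ‖-bbar + -abar‖ = ‖abar + bbar‖ := by
    rw [← norm_neg]; congr 1; abel
  have e2 : ‖-bbar - abar‖ = ‖abar + bbar‖ := by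
    rw [← norm_neg]; congr 1; abel
  have e3 : ‖-abar - bbar‖ = ‖abar + bbar‖ := by
    rw [← norm_neg]; congr 1; abel
  rw [e1, e2, e3] at h2
  have hz : ‖abar + bbar‖ = 0 := by nlinarith [sq_nonneg ‖abar + bbar‖]
  have hz0 : abar + bbar = 0 := norm_eq_zero.mp hz
  have hz2 : -bbar = abar := neg_eq_of_add_eq_zero_left hz0
  rw [hz2] at hmem2
  exact ⟨abar, hmem2⟩

end Aux

section Aux4
variable {X : Type*} [NormedAddCommGroup X] [InnerProductSpace ℝ X]

lemma resolvent_exists [CompleteSpace X] (A : X → Set X)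
    (hAmono : ∀ x y u v, u ∈ A x → v ∈ A y → (0:ℝ) ≤ ⟪x - y, u - v⟫)
    (hAmax : ∀ A' : X → Set X,
      (∀ x y u v, u ∈ A' x → v ∈ A' y → (0:ℝ) ≤ ⟪x - y, u - v⟫) →
      (∀ x, A x ⊆ A' x) → ∀ x, A' x ⊆ A x)
    (hne : ∃ p v, v ∈ A p) (γ₀ : ℝ) (hγ₀ : 0 < γ₀) (q : X) :
    ∃ p u, u ∈ A p ∧ p + γ₀ • u = q := by
  obtain ⟨p₀, v₀, hp₀⟩ := hne
  set M : X → Set X := fun yy => (fun u => γ₀ • u - q) '' A yy with hM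
  have hMmono : ∀ x y u v, u ∈ M x → v ∈ M y → (0:ℝ) ≤ ⟪x - y, u - v⟫ := by
    rintro x y _ _ ⟨u', hu', rfl⟩ ⟨v', hv', rfl⟩
    have hrw : γ₀ • u' - q - (γ₀ • v' - q) = γ₀ • (u' - v') := by
      rw [smul_sub]; abel
    rw [hrw, real_inner_smul_right]
    exact mul_nonneg hγ₀.le (hAmono _ _ _ _ hu' hv')
  have hMmax : ∀ M' : X → Set X,
      (∀ x y u v, u ∈ M' x → v ∈ M' y → (0:ℝ) ≤ ⟪x - y, u - v⟫) →
      (∀ x, M x ⊆ M' x) → ∀ x, M' x ⊆ M x := by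
    intro M' hmono' hext' x w hw
    set A' : X → Set X := fun yy => (fun w => γ₀⁻¹ • (w + q)) '' M' yy with hA'
    have hA'mono : ∀ x y u v, u ∈ A' x → v ∈ A' y → (0:ℝ) ≤ ⟪x - y, u - v⟫ := by
      rintro x y _ _ ⟨u', hu', rfl⟩ ⟨v', hv', rfl⟩
      have hrw : γ₀⁻¹ • (u' + q) - γ₀⁻¹ • (v' + q) = γ₀⁻¹ • (u' - v') := by
        rw [← smul_sub]; congr 1; abel
      rw [hrw, real_inner_smul_right]
      exact mul_nonneg (by positivity) (hmono' _ _ _ _ hu' hv')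
    have hA'ext : ∀ yy, A yy ⊆ A' yy := by
      intro yy u hu
      refine ⟨γ₀ • u - q, hext' yy ⟨u, hu, rfl⟩, ?_⟩
      simp only []
      rw [show γ₀ • u - q + q = γ₀ • u by abel, inv_smul_smul₀ hγ₀.ne']
    have hsub := hAmax A' hA'mono hA'ext
    have hmem : γ₀⁻¹ • (w + q) ∈ A x := hsub x ⟨w, hw, rfl⟩
    refine ⟨γ₀⁻¹ • (w + q), hmem, ?_⟩
    simp only []
    rw [smul_inv_smul₀ hγ₀.ne']
    abel
  have hMne : ∃ p v, v ∈ M p := ⟨p₀, γ₀ • v₀ - q, ⟨v₀, hp₀, rfl⟩⟩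
  obtain ⟨p, hp⟩ := minty_core M hMmono hMmax hMne
  obtain ⟨u, hu, hequ⟩ := hp
  refine ⟨p, u, hu, ?_⟩
  have : γ₀ • u - q = -p := hequ
  linear_combination (norm := abel) this

lemma demiclosed [CompleteSpace X] (A : X → Set X)
    (hAmono : ∀ x y u v, u ∈ A x → v ∈ A y → (0:ℝ) ≤ ⟪x - y, u - v⟫)
    (hAmax : ∀ A' : X → Set X,
      (∀ x y u v, u ∈ A' x → v ∈ A' y → (0:ℝ) ≤ ⟪x - y, u - v⟫) →
      (∀ x, A x ⊆ A' x) → ∀ x, A' x ⊆ A x)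
    (hne : ∃ p v, v ∈ A p)
    (B : X → X) (β : ℝ) (hβ : 0 < β)
    (hBlip : ∀ x y, ‖B x - B y‖ ≤ β * ‖x - y‖)
    (xb : X) (H : ∀ y v, v ∈ A y → (0:ℝ) ≤ ⟪y - xb, v + B y⟫) :
    -B xb ∈ A xb := by
  set γ₀ : ℝ := 1/(β+1) with hγ₀def
  have hγ₀ : 0 < γ₀ := by positivity
  have hres := fun q => resolvent_exists A hAmono hAmax hne γ₀ hγ₀ q
  choose J U hJU hJeq using hres
  have hJnon : ∀ q q', ‖J q - J q'‖ ≤ ‖q - q'‖ := by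
    intro q q'
    have hmono := hAmono (J q) (J q') (U q) (U q') (hJU q) (hJU q')
    have hid : J q - J q' = (q - q') - γ₀ • (U q - U q') := by
      have h1 := hJeq q; have h2 := hJeq q'
      rw [smul_sub]
      have : J q + γ₀ • U q - (J q' + γ₀ • U q') = q - q' := by rw [h1, h2]
      linear_combination (norm := abel) this
    have hsq : ‖J q - J q'‖^2 = ⟪J q - J q', q - q'⟫ - γ₀ * ⟪J q - J q', U q - U q'⟫ := by
      rw [← real_inner_self_eq_norm_sq]
      nth_rewrite 2 [hid]
      rw [inner_sub_right, real_inner_smul_right]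
    have hcs := real_inner_le_norm (J q - J q') (q - q')
    rcases eq_or_lt_of_le (norm_nonneg (J q - J q')) with h0 | h0
    · rw [← h0]; exact norm_nonneg _
    · have h1 : ‖J q - J q'‖ * ‖J q - J q'‖ ≤ ‖J q - J q'‖ * ‖q - q'‖ := by
        nlinarith [mul_nonneg hγ₀.le hmono]
      exact le_of_mul_le_mul_left h1 h0
  set Φ : X → X := fun p => J (xb - γ₀ • B p) with hΦ
  have hKnn : (0:ℝ) ≤ β/(β+1) := by positivity
  set K : NNReal := ⟨β/(β+1), hKnn⟩ with hK
  have hK1 : K < 1 := by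
    rw [← NNReal.coe_lt_coe]
    simp only [hK, NNReal.coe_one, NNReal.coe_mk]
    show β / (β + 1) < 1
    rw [div_lt_one (by positivity)]
    linarith
  have hΦlip : LipschitzWith K Φ := by
    apply LipschitzWith.of_dist_le_mul
    intro p p'
    simp only [hΦ, dist_eq_norm]
    calc ‖J (xb - γ₀ • B p) - J (xb - γ₀ • B p')‖
        ≤ ‖(xb - γ₀ • B p) - (xb - γ₀ • B p')‖ := hJnon _ _
      _ = γ₀ * ‖B p - B p'‖ := by
          rw [show (xb - γ₀ • B p) - (xb - γ₀ • B p') = γ₀ • (B p' - B p) by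
            rw [smul_sub]; abel]
          rw [norm_smul, Real.norm_of_nonneg hγ₀.le, ← norm_neg, neg_sub]
      _ ≤ γ₀ * (β * ‖p - p'‖) := by
          exact mul_le_mul_of_nonneg_left (hBlip p p') hγ₀.le
      _ = (K:ℝ) * ‖p - p'‖ := by
          show γ₀ * (β * ‖p - p'‖) = (β / (β + 1)) * ‖p - p'‖
          simp only [hK, NNReal.coe_mk, hγ₀def]
          field_simp
  obtain ⟨p, hfix, -⟩ := ContractingWith.exists_fixedPoint ⟨hK1, hΦlip⟩ xb (edist_ne_top _ _)
  have hfix' : J (xb - γ₀ • B p) = p := hfix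
  have h1 : p + γ₀ • U (xb - γ₀ • B p) = xb - γ₀ • B p := by
    have := hJeq (xb - γ₀ • B p); rwa [hfix'] at this
  have hup : γ₀ • (U (xb - γ₀ • B p) + B p) = xb - p := by
    rw [smul_add]
    linear_combination (norm := abel) h1
  have hmemp : U (xb - γ₀ • B p) ∈ A p := by
    have := hJU (xb - γ₀ • B p); rwa [hfix'] at this
  have hHp := H p (U (xb - γ₀ • B p)) hmemp
  have hinner : ⟪p - xb, U (xb - γ₀ • B p) + B p⟫ = γ₀⁻¹ * (- ‖p - xb‖^2) := by
    have hUB : U (xb - γ₀ • B p) + B p = γ₀⁻¹ • (xb - p) := by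
      rw [← hup, inv_smul_smul₀ hγ₀.ne']
    rw [hUB, real_inner_smul_right, show xb - p = -(p - xb) by abel, inner_neg_right,
      real_inner_self_eq_norm_sq]
  have hpxb : ‖p - xb‖^2 ≤ 0 := by
    by_contra hcon
    push_neg at hcon
    have h9 : 0 < γ₀⁻¹ * ‖p - xb‖^2 := mul_pos (inv_pos.mpr hγ₀) hcon
    rw [hinner] at hHp
    nlinarith
  have hpeq : p = xb := by
    have : ‖p - xb‖ = 0 := le_antisymm (by nlinarith [norm_nonneg (p - xb), sq_nonneg ‖p - xb‖]) (norm_nonneg _)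
    have := norm_sub_eq_zero_iff.mp this
    exact this
  subst hpeq
  have h2 : γ₀ • (U (p - γ₀ • B p) + B p) = 0 := by rw [hup, sub_self]
  have h3 : U (p - γ₀ • B p) + B p = 0 := by
    rcases smul_eq_zero.mp h2 with h | h
    · exact absurd h hγ₀.ne'
    · exact h
  have h4 : U (p - γ₀ • B p) = -B p := eq_neg_of_add_eq_zero_left h3
  rw [← h4]
  exact hmemp
end Aux4



lemma weak_compact {X : Type*} [NormedAddCommGroup X] [InnerProductSpace ℝ X] [CompleteSpace X]
    (c : ℕ → X) (R : ℝ) (hb : ∀ n, ‖c n‖ ≤ R) :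
    ∃ φ : ℕ → ℕ, StrictMono φ ∧ ∃ z : X,
      ∀ u : X, Tendsto (fun j => ⟪c (φ j), u⟫) atTop (𝓝 ⟪z, u⟫) := by
  classical
  have hR0 : (0:ℝ) ≤ R := le_trans (norm_nonneg (c 0)) (hb 0)
  set V := (Submodule.span ℝ (Set.range c)).topologicalClosure with hV
  have hcV : ∀ n, c n ∈ V := fun n =>
    Submodule.le_topologicalClosure _ (Submodule.subset_span (Set.mem_range_self n))
  set s : Set (ℕ → ℝ) := Set.univ.pi (fun k => Set.Icc (-(R * ‖c k‖)) (R * ‖c k‖)) with hs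
  have hscompact : IsCompact s := isCompact_univ_pi (fun k => isCompact_Icc)
  have hbd : ∀ n (u : X), |⟪c n, u⟫| ≤ R * ‖u‖ := by
    intro n u
    calc |⟪c n, u⟫| ≤ ‖c n‖ * ‖u‖ := abs_real_inner_le_norm _ _
      _ ≤ R * ‖u‖ := mul_le_mul_of_nonneg_right (hb n) (norm_nonneg u)
  have hmem : ∀ n, (fun k => ⟪c n, c k⟫) ∈ s := by
    intro n
    rw [hs, Set.mem_univ_pi]
    intro k
    rw [Set.mem_Icc, ← abs_le]
    exact hbd n (c k)
  obtain ⟨L, _, φ, hφmono, hφtend⟩ := hscompact.tendsto_subseq hmem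
  have hptwise : ∀ k, Tendsto (fun j => ⟪c (φ j), c k⟫) atTop (𝓝 (L k)) := by
    rw [tendsto_pi_nhds] at hφtend
    exact fun k => hφtend k
  have hspan : ∀ w ∈ Submodule.span ℝ (Set.range c),
      ∃ l : ℝ, Tendsto (fun j => ⟪c (φ j), w⟫) atTop (𝓝 l) := by
    intro w hw
    induction hw using Submodule.span_induction with
    | mem w hw =>
        obtain ⟨k, rfl⟩ := hw
        exact ⟨L k, hptwise k⟩
    | zero => exact ⟨0, by simpa using (tendsto_const_nhds : Tendsto (fun _ : ℕ => (0:ℝ)) atTop (𝓝 0))⟩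
    | add w₁ w₂ h₁ h₂ ih₁ ih₂ =>
        obtain ⟨l₁, hl₁⟩ := ih₁; obtain ⟨l₂, hl₂⟩ := ih₂
        exact ⟨l₁ + l₂, by simpa [inner_add_right] using hl₁.add hl₂⟩
    | smul a w hw ih =>
        obtain ⟨l, hl⟩ := ih
        exact ⟨a * l, by simpa [real_inner_smul_right] using hl.const_mul a⟩
  have hclos : ∀ v ∈ V, ∃ l : ℝ, Tendsto (fun j => ⟪c (φ j), v⟫) atTop (𝓝 l) := by
    intro v hv
    have hCau : CauchySeq (fun j => ⟪c (φ j), v⟫) := by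
      rw [Metric.cauchySeq_iff']
      intro ε hε
      have hδ : (0:ℝ) < ε/(3*(R+1)) := by positivity
      have hvin : v ∈ closure ((Submodule.span ℝ (Set.range c) : Submodule ℝ X) : Set X) := by
        rw [hV] at hv
        exact hv
      obtain ⟨w, hwmem, hwd⟩ := Metric.mem_closure_iff.mp hvin _ hδ
      obtain ⟨lw, hlw⟩ := hspan w hwmem
      have hCw : CauchySeq (fun j => ⟪c (φ j), w⟫) := hlw.cauchySeq
      rw [Metric.cauchySeq_iff'] at hCw
      obtain ⟨N, hN⟩ := hCw (ε/3) (by positivity)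
      refine ⟨N, fun n hn => ?_⟩
      have h1 : ∀ j, |⟪c (φ j), v⟫ - ⟪c (φ j), w⟫| ≤ R * ‖v - w‖ := by
        intro j
        rw [← inner_sub_right]
        exact hbd _ _
      have hvw : R * ‖v - w‖ < ε/3 := by
        have : ‖v - w‖ < ε/(3*(R+1)) := by
          rw [← dist_eq_norm]; exact hwd
        calc R * ‖v - w‖ ≤ R * (ε/(3*(R+1))) := by
              exact mul_le_mul_of_nonneg_left this.le hR0
          _ < ε/3 := by
              have h3 : R * (ε / (3*(R+1))) = R * ε / (3*(R+1)) := (mul_div_assoc _ _ _).symm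
              rw [h3, div_lt_div_iff₀ (by positivity) (by positivity)]
              nlinarith
      have h2 := hN n hn
      rw [Real.dist_eq] at h2 ⊢
      have t1 := h1 n
      have t2 := h1 N
      have : |⟪c (φ n), v⟫ - ⟪c (φ N), v⟫|
          ≤ |⟪c (φ n), v⟫ - ⟪c (φ n), w⟫| + |⟪c (φ n), w⟫ - ⟪c (φ N), w⟫|
            + |⟪c (φ N), w⟫ - ⟪c (φ N), v⟫| := by
        have := abs_sub_le (⟪c (φ n), v⟫) (⟪c (φ n), w⟫) (⟪c (φ N), v⟫)
        have := abs_sub_le (⟪c (φ n), w⟫) (⟪c (φ N), w⟫) (⟪c (φ N), v⟫)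
        linarith [abs_sub_le (⟪c (φ n), v⟫) (⟪c (φ n), w⟫) (⟪c (φ N), v⟫),
          abs_sub_le (⟪c (φ n), w⟫) (⟪c (φ N), w⟫) (⟪c (φ N), v⟫)]
      have t3 : |⟪c (φ N), w⟫ - ⟪c (φ N), v⟫| = |⟪c (φ N), v⟫ - ⟪c (φ N), w⟫| := abs_sub_comm _ _
      rw [t3] at this
      linarith
    exact cauchySeq_tendsto_of_complete hCau
  have hlim : ∀ u : X, ∃ l : ℝ, Tendsto (fun j => ⟪c (φ j), u⟫) atTop (𝓝 l) := by
    intro u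
    have hperp : ∀ n, ⟪c n, u⟫ = ⟪c n, ((Submodule.orthogonalProjection V u : V) : X)⟫ := by
      intro n
      have horth : u - ((Submodule.orthogonalProjection V u : V) : X) ∈ Vᗮ :=
        V.sub_starProjection_mem_orthogonal u
      have h0 : ⟪c n, u - ((Submodule.orthogonalProjection V u : V) : X)⟫ = 0 :=
        Submodule.inner_right_of_mem_orthogonal (hcV n) horth
      rw [inner_sub_right] at h0
      linarith
    obtain ⟨l, hl⟩ := hclos ((Submodule.orthogonalProjection V u : V) : X) (Submodule.orthogonalProjection V u).2
    refine ⟨l, ?_⟩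
    have : (fun j => ⟪c (φ j), u⟫) = fun j => ⟪c (φ j), ((Submodule.orthogonalProjection V u : V) : X)⟫ := by
      funext j; exact hperp (φ j)
    rw [this]
    exact hl
  choose l hl using hlim
  have hadd : ∀ u v : X, l (u + v) = l u + l v := by
    intro u v
    refine tendsto_nhds_unique (hl (u + v)) ?_
    simpa [inner_add_right] using (hl u).add (hl v)
  have hsmul : ∀ (a : ℝ) (u : X), l (a • u) = a * l u := by
    intro a u
    refine tendsto_nhds_unique (hl (a • u)) ?_
    simpa [real_inner_smul_right] using (hl u).const_mul a
  have hbound : ∀ u, |l u| ≤ R * ‖u‖ := by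
    intro u
    have habs : Tendsto (fun j => |⟪c (φ j), u⟫|) atTop (𝓝 |l u|) := (hl u).abs
    exact le_of_tendsto habs (Filter.Eventually.of_forall (fun j => hbd (φ j) u))
  set f : X →ₗ[ℝ] ℝ :=
    { toFun := l, map_add' := hadd, map_smul' := hsmul } with hf
  set g : X →L[ℝ] ℝ := LinearMap.mkContinuous f R (fun u => by
    rw [Real.norm_eq_abs]; exact hbound u) with hg
  set z : X := (InnerProductSpace.toDual ℝ X).symm g with hz
  refine ⟨φ, hφmono, z, fun u => ?_⟩
  have hzu : ⟪z, u⟫ = g u := by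
    rw [hz]
    exact InnerProductSpace.toDual_symm_apply
  rw [hzu]
  exact hl u


set_option maxHeartbeats 1000000 in
/-- Corollary 5.3 (Tseng's forward-backward-forward algorithm). -/
theorem stmt_5
    {X : Type*} [NormedAddCommGroup X] [InnerProductSpace ℝ X] [CompleteSpace X]
    (A : X → Set X)
    (hAmono : ∀ x y u v, u ∈ A x → v ∈ A y → (0:ℝ) ≤ ⟪x - y, u - v⟫)
    (hAmax : ∀ A' : X → Set X,
      (∀ x y u v, u ∈ A' x → v ∈ A' y → (0:ℝ) ≤ ⟪x - y, u - v⟫) →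
      (∀ x, A x ⊆ A' x) → ∀ x, A' x ⊆ A x)
    (B : X → X) (β : ℝ) (hβ : 0 < β)
    (hBmono : ∀ x y, (0:ℝ) ≤ ⟪x - y, B x - B y⟫)
    (hBlip : ∀ x y, ‖B x - B y‖ ≤ β * ‖x - y‖)
    (hzer : ∃ z, ∃ u ∈ A z, u + B z = 0)
    (x₀ : X) (ε : ℝ) (hε : ε ∈ Set.Ioo (0:ℝ) (1 / (β + 1)))
    (γ : ℕ → ℝ) (hγ : ∀ n, γ n ∈ Set.Icc ε ((1 - ε) / β))
    (x vstar y : ℕ → X)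
    (hx0 : x 0 = x₀)
    (hvstar : ∀ n, vstar n = γ n • B (x n))
    (hy : ∀ n, (γ n)⁻¹ • (x n - vstar n - y n) ∈ A (y n))
    (hxrec : ∀ n, x (n + 1) = y n - γ n • B (y n) + vstar n) :
    ∃ z, (∃ u ∈ A z, u + B z = 0) ∧
      ∀ u : X, Tendsto (fun n => ⟪x n, u⟫) atTop (𝓝 ⟪z, u⟫) := by
  classical
  obtain ⟨hε0, hε2⟩ := hε
  have hε1 : ε < 1 := by
    have h1 : 1/(β+1) ≤ 1 := by
      rw [div_le_one (by positivity)]; linarith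
    linarith
  have hγpos : ∀ n, 0 < γ n := fun n => lt_of_lt_of_le hε0 (hγ n).1
  have hγβ : ∀ n, γ n * β ≤ 1 - ε := by
    intro n
    have := (hγ n).2
    rwa [le_div_iff₀ hβ] at this
  set Wf : ℕ → X := fun n => (γ n)⁻¹ • (x n - vstar n - y n) with hWf
  have hWA : ∀ n, Wf n ∈ A (y n) := hy
  have hgW : ∀ n, γ n • Wf n = x n - γ n • B (x n) - y n := by
    intro n
    rw [hWf]
    simp only []
    rw [smul_inv_smul₀ (hγpos n).ne', hvstar n]
  -- Fejér-type inequality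
  have hfej : ∀ (n : ℕ) (z uz : X), uz ∈ A z → uz + B z = 0 →
      ‖x (n+1) - z‖^2 + ε * ‖x n - y n‖^2 ≤ ‖x n - z‖^2 := by
    intro n z uz hz huz
    have hxn1 : x (n+1) - z = (y n - z) + γ n • (B (x n) - B (y n)) := by
      rw [hxrec n, hvstar n, smul_sub]; abel
    have e1 : ‖x (n+1) - z‖^2 = ‖y n - z‖^2
        + 2*(γ n * ⟪y n - z, B (x n) - B (y n)⟫) + γ n^2 * ‖B (x n) - B (y n)‖^2 := by
      rw [hxn1, norm_add_sq_real, real_inner_smul_right, norm_smul,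
        Real.norm_of_nonneg (hγpos n).le]
      ring
    have e2 : ‖x n - z‖^2 = ‖x n - y n‖^2 + 2*⟪x n - y n, y n - z⟫ + ‖y n - z‖^2 := by
      rw [show x n - z = (x n - y n) + (y n - z) by abel, norm_add_sq_real]
    have key1 : ⟪x n - y n, y n - z⟫ - γ n * ⟪y n - z, B (x n) - B (y n)⟫
        = γ n * ⟪y n - z, Wf n + B (y n)⟫ := by
      have hcomb : γ n • (Wf n + B (y n)) = (x n - y n) - γ n • (B (x n) - B (y n)) := by
        rw [smul_add, hgW n, smul_sub]; abel
      have h5 : ⟪y n - z, γ n • (Wf n + B (y n))⟫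
          = ⟪y n - z, (x n - y n) - γ n • (B (x n) - B (y n))⟫ := by
        rw [hcomb]
      rw [real_inner_smul_right, inner_sub_right, real_inner_smul_right] at h5
      have hc : ⟪x n - y n, y n - z⟫ = ⟪y n - z, x n - y n⟫ := real_inner_comm _ _
      linarith
    have hIP : (0:ℝ) ≤ ⟪y n - z, Wf n + B (y n)⟫ := by
      have m1 := hAmono (y n) z (Wf n) uz (hWA n) hz
      have m2 := hBmono (y n) z
      have hsplit : Wf n + B (y n) = (Wf n - uz) + (B (y n) - B z) + (uz + B z) := by abel
      have h6 : ⟪y n - z, Wf n + B (y n)⟫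
          = ⟪y n - z, Wf n - uz⟫ + ⟪y n - z, B (y n) - B z⟫ + ⟪y n - z, uz + B z⟫ := by
        rw [hsplit, inner_add_right, inner_add_right]
      rw [huz, inner_zero_right] at h6
      linarith
    have msum : (0:ℝ) ≤ γ n * ⟪y n - z, Wf n + B (y n)⟫ := mul_nonneg (hγpos n).le hIP
    have lip2 : γ n^2 * ‖B (x n) - B (y n)‖^2 ≤ (1-ε)^2 * ‖x n - y n‖^2 := by
      have h1 : γ n * ‖B (x n) - B (y n)‖ ≤ (1-ε) * ‖x n - y n‖ := by
        calc γ n * ‖B (x n) - B (y n)‖ ≤ γ n * (β * ‖x n - y n‖) :=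
              mul_le_mul_of_nonneg_left (hBlip _ _) (hγpos n).le
          _ = (γ n * β) * ‖x n - y n‖ := by ring
          _ ≤ (1-ε) * ‖x n - y n‖ := mul_le_mul_of_nonneg_right (hγβ n) (norm_nonneg _)
      nlinarith [mul_nonneg (hγpos n).le (norm_nonneg (B (x n) - B (y n)))]
    have hprod : (0:ℝ) ≤ ε * (1-ε) * ‖x n - y n‖^2 :=
      mul_nonneg (mul_nonneg hε0.le (by linarith)) (sq_nonneg _)
    nlinarith [e1, e2, key1, msum, lip2, hprod]
  obtain ⟨z₀, u₀, hu₀A, hu₀⟩ := hzer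
  have hz₀ : -B z₀ ∈ A z₀ := by
    have : u₀ = -B z₀ := eq_neg_of_add_eq_zero_left hu₀
    rwa [this] at hu₀A
  have hSfej : ∀ (z : X), -B z ∈ A z → ∀ n,
      ‖x (n+1) - z‖^2 + ε * ‖x n - y n‖^2 ≤ ‖x n - z‖^2 :=
    fun z hz n => hfej n z (-B z) hz (neg_add_cancel _)
  have hDanti : ∀ (z : X), -B z ∈ A z → Antitone (fun n => ‖x n - z‖^2) := by
    intro z hz
    apply antitone_nat_of_succ_le
    intro n
    have := hSfej z hz n
    nlinarith [mul_nonneg hε0.le (sq_nonneg ‖x n - y n‖)]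
  have hDconv : ∀ (z : X), -B z ∈ A z →
      ∃ dl : ℝ, Tendsto (fun n => ‖x n - z‖^2) atTop (𝓝 dl) := by
    intro z hz
    refine ⟨_, tendsto_atTop_ciInf (hDanti z hz) ⟨0, ?_⟩⟩
    rintro r ⟨n, rfl⟩
    positivity
  -- x n - y n → 0
  have hxy0 : Tendsto (fun n => ‖x n - y n‖) atTop (𝓝 0) := by
    obtain ⟨dl, hdl⟩ := hDconv z₀ hz₀
    have h1 : Tendsto (fun n => ‖x (n+1) - z₀‖^2) atTop (𝓝 dl) := by
      have := hdl.comp (tendsto_add_atTop_nat 1)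
      exact this
    have h2 : Tendsto (fun n => (‖x n - z₀‖^2 - ‖x (n+1) - z₀‖^2)/ε) atTop (𝓝 0) := by
      have h3 := (hdl.sub h1).div_const ε
      simpa using h3
    have hsq : Tendsto (fun n => ‖x n - y n‖^2) atTop (𝓝 0) := by
      apply squeeze_zero (fun n => sq_nonneg _) (fun n => ?_) h2
      have := hSfej z₀ hz₀ n
      rw [le_div_iff₀ hε0]
      linarith
    have := (Real.continuous_sqrt.tendsto 0).comp hsq
    simp only [Function.comp_def, Real.sqrt_zero] at this
    convert this using 2 with n
    rw [Real.sqrt_sq (norm_nonneg _)]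
  -- bounds
  set Rb : ℝ := ‖x 0 - z₀‖ + ‖z₀‖ with hRb
  have hxb : ∀ n, ‖x n‖ ≤ Rb := by
    intro n
    have h1 : ‖x n - z₀‖^2 ≤ ‖x 0 - z₀‖^2 := hDanti z₀ hz₀ (Nat.zero_le n)
    have h2 : ‖x n - z₀‖ ≤ ‖x 0 - z₀‖ := by nlinarith [norm_nonneg (x n - z₀), norm_nonneg (x 0 - z₀)]
    calc ‖x n‖ = ‖(x n - z₀) + z₀‖ := by congr 1; abel
      _ ≤ ‖x n - z₀‖ + ‖z₀‖ := norm_add_le _ _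
      _ ≤ Rb := by rw [hRb]; linarith
  have hxyb : ∀ n, ‖x n - y n‖ ≤ Real.sqrt (‖x 0 - z₀‖^2/ε) := by
    intro n
    have h1 := hSfej z₀ hz₀ n
    have h2 : ‖x n - z₀‖^2 ≤ ‖x 0 - z₀‖^2 := hDanti z₀ hz₀ (Nat.zero_le n)
    have h3 : ‖x n - y n‖^2 ≤ ‖x 0 - z₀‖^2/ε := by
      rw [le_div_iff₀ hε0]
      nlinarith [sq_nonneg ‖x (n+1) - z₀‖]
    rw [show ‖x n - y n‖ = Real.sqrt (‖x n - y n‖^2) by rw [Real.sqrt_sq (norm_nonneg _)]]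
    exact Real.sqrt_le_sqrt h3
  set Ry : ℝ := Rb + Real.sqrt (‖x 0 - z₀‖^2/ε) with hRy
  have hyb : ∀ n, ‖y n‖ ≤ Ry := by
    intro n
    calc ‖y n‖ = ‖x n - (x n - y n)‖ := by congr 1; abel
      _ ≤ ‖x n‖ + ‖x n - y n‖ := norm_sub_le _ _
      _ ≤ Ry := by rw [hRy]; exact add_le_add (hxb n) (hxyb n)
  -- s n := Wf n + B (y n) → 0 strongly
  have hsid : ∀ n, Wf n + B (y n) = (γ n)⁻¹ • (x n - y n) + (B (y n) - B (x n)) := by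
    intro n
    have h1 : Wf n = (γ n)⁻¹ • (x n - y n) - B (x n) := by
      have h2 : γ n • Wf n = γ n • ((γ n)⁻¹ • (x n - y n) - B (x n)) := by
        rw [hgW n, smul_sub, smul_inv_smul₀ (hγpos n).ne']
        abel
      exact smul_right_injective X (hγpos n).ne' h2
    rw [h1]; abel
  have hs0 : Tendsto (fun n => ‖Wf n + B (y n)‖) atTop (𝓝 0) := by
    have hbound : ∀ n, ‖Wf n + B (y n)‖ ≤ (ε⁻¹ + β) * ‖x n - y n‖ := by
      intro n
      rw [hsid n]
      calc ‖(γ n)⁻¹ • (x n - y n) + (B (y n) - B (x n))‖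
          ≤ ‖(γ n)⁻¹ • (x n - y n)‖ + ‖B (y n) - B (x n)‖ := norm_add_le _ _
        _ ≤ (γ n)⁻¹ * ‖x n - y n‖ + β * ‖x n - y n‖ := by
            rw [norm_smul, Real.norm_of_nonneg (inv_nonneg.mpr (hγpos n).le)]
            have h9 := hBlip (y n) (x n)
            rw [show ‖y n - x n‖ = ‖x n - y n‖ by rw [← norm_neg, neg_sub]] at h9
            linarith
        _ ≤ (ε⁻¹ + β) * ‖x n - y n‖ := by
            have hinv : (γ n)⁻¹ ≤ ε⁻¹ := by
              apply inv_anti₀ hε0 (hγ n).1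
            nlinarith [norm_nonneg (x n - y n)]
    apply squeeze_zero (fun n => norm_nonneg _) hbound
    simpa using hxy0.const_mul (ε⁻¹ + β)
  -- demiclosedness along weakly convergent subsequences
  have hdemicl : ∀ (nn : ℕ → ℕ), Tendsto nn atTop atTop → ∀ zc : X,
      (∀ u, Tendsto (fun j => ⟪x (nn j), u⟫) atTop (𝓝 ⟪zc, u⟫)) → -B zc ∈ A zc := by
    intro nn hnn zc hzc
    apply demiclosed A hAmono hAmax ⟨y 0, Wf 0, hWA 0⟩ B β hβ hBlip zc
    intro p v hv
    have hpern : ∀ n, ⟪p - y n, Wf n + B (y n)⟫ ≤ ⟪p - y n, v + B p⟫ := by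
      intro n
      have m1 := hAmono p (y n) v (Wf n) hv (hWA n)
      have m2 := hBmono p (y n)
      have h6 : ⟪p - y n, v + B p⟫ - ⟪p - y n, Wf n + B (y n)⟫
          = ⟪p - y n, v - Wf n⟫ + ⟪p - y n, B p - B (y n)⟫ := by
        rw [← inner_sub_right, ← inner_add_right]
        congr 1
        abel
      linarith
    have hyweak : ∀ u : X, Tendsto (fun j => ⟪y (nn j), u⟫) atTop (𝓝 ⟪zc, u⟫) := by
      intro u
      have h0 : Tendsto (fun j => ⟪x (nn j) - y (nn j), u⟫) atTop (𝓝 0) := by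
        have hbd : ∀ j, ‖⟪x (nn j) - y (nn j), u⟫‖ ≤ ‖x (nn j) - y (nn j)‖ * ‖u‖ := by
          intro j
          rw [Real.norm_eq_abs]
          exact abs_real_inner_le_norm _ _
        have hg : Tendsto (fun j => ‖x (nn j) - y (nn j)‖ * ‖u‖) atTop (𝓝 0) := by
          simpa using (hxy0.comp hnn).mul_const ‖u‖
        exact squeeze_zero_norm hbd hg
      have := (hzc u).sub h0
      simp only [sub_zero] at this
      apply this.congr
      intro j
      rw [← inner_sub_left]
      congr 1
      abel
    have hLHS : Tendsto (fun j => ⟪p - y (nn j), v + B p⟫) atTop (𝓝 ⟪p - zc, v + B p⟫) := by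
      have h8 : Tendsto (fun j => ⟪p, v + B p⟫ - ⟪y (nn j), v + B p⟫) atTop
          (𝓝 (⟪p, v + B p⟫ - ⟪zc, v + B p⟫)) := tendsto_const_nhds.sub (hyweak (v + B p))
      simp only [inner_sub_left]
      exact h8
    have hRHS : Tendsto (fun j => ⟪p - y (nn j), Wf (nn j) + B (y (nn j))⟫) atTop (𝓝 0) := by
      have hbd : ∀ j, ‖⟪p - y (nn j), Wf (nn j) + B (y (nn j))⟫‖
          ≤ (‖p‖ + Ry) * ‖Wf (nn j) + B (y (nn j))‖ := by
        intro j
        rw [Real.norm_eq_abs]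
        calc |⟪p - y (nn j), Wf (nn j) + B (y (nn j))⟫|
            ≤ ‖p - y (nn j)‖ * ‖Wf (nn j) + B (y (nn j))‖ := abs_real_inner_le_norm _ _
          _ ≤ (‖p‖ + Ry) * ‖Wf (nn j) + B (y (nn j))‖ := by
              apply mul_le_mul_of_nonneg_right _ (norm_nonneg _)
              calc ‖p - y (nn j)‖ ≤ ‖p‖ + ‖y (nn j)‖ := norm_sub_le _ _
                _ ≤ ‖p‖ + Ry := by linarith [hyb (nn j)]
      have hg : Tendsto (fun j => (‖p‖ + Ry) * ‖Wf (nn j) + B (y (nn j))‖) atTop (𝓝 0) := by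
        simpa using (hs0.comp hnn).const_mul (‖p‖ + Ry)
      exact squeeze_zero_norm hbd hg
    exact le_of_tendsto_of_tendsto' hRHS hLHS (fun j => hpern (nn j))
  -- extract main weak limit
  obtain ⟨φ, hφ, z, hzweak⟩ := weak_compact x Rb hxb
  have hz : -B z ∈ A z := hdemicl φ hφ.tendsto_atTop z hzweak
  refine ⟨z, ⟨-B z, hz, neg_add_cancel _⟩, ?_⟩
  intro u
  apply tendsto_of_subseq_tendsto
  intro ns hns
  obtain ⟨φ', hφ', z', hz'weak⟩ := weak_compact (fun j => x (ns j)) Rb (fun j => hxb (ns j))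
  have hz' : -B z' ∈ A z' := hdemicl (ns ∘ φ') (hns.comp hφ'.tendsto_atTop) z' hz'weak
  have hzz : z' = z := by
    obtain ⟨dz, hdz⟩ := hDconv z hz
    obtain ⟨dz', hdz'⟩ := hDconv z' hz'
    have hid : ∀ n, ⟪x n, z - z'⟫ = (‖x n - z'‖^2 - ‖x n - z‖^2)/2 + (‖z‖^2 - ‖z'‖^2)/2 := by
      intro n
      have e1 : ‖x n - z‖^2 = ‖x n‖^2 - 2*⟪x n, z⟫ + ‖z‖^2 := norm_sub_sq_real _ _
      have e2 : ‖x n - z'‖^2 = ‖x n‖^2 - 2*⟪x n, z'⟫ + ‖z'‖^2 := norm_sub_sq_real _ _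
      rw [inner_sub_right]
      linarith
    have hconv : Tendsto (fun n => ⟪x n, z - z'⟫) atTop
        (𝓝 ((dz' - dz)/2 + (‖z‖^2 - ‖z'‖^2)/2)) := by
      simp only [hid]
      exact ((hdz'.sub hdz).div_const 2).add tendsto_const_nhds
    have l1 : ⟪z, z - z'⟫ = (dz' - dz)/2 + (‖z‖^2 - ‖z'‖^2)/2 :=
      tendsto_nhds_unique (hzweak (z - z')) (hconv.comp hφ.tendsto_atTop)
    have l2 : ⟪z', z - z'⟫ = (dz' - dz)/2 + (‖z‖^2 - ‖z'‖^2)/2 :=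
      tendsto_nhds_unique (hz'weak (z - z')) (hconv.comp (hns.comp hφ'.tendsto_atTop))
    have h7 : ⟪z - z', z - z'⟫ = (0:ℝ) := by
      rw [inner_sub_left]
      linarith
    have h8 : z - z' = 0 := inner_self_eq_zero.mp h7
    have h9 : z = z' := sub_eq_zero.mp h8
    exact h9.symm
  refine ⟨φ', ?_⟩
  have := hz'weak u
  rwa [hzz] at this
end

section
/- Let Y and Z be reflexive real Banach spaces, let A : Y → 2^{Y*} and B : Z → 2^{Z*} be maximally monotone, let L : Y → Z be bounded linear, let s* ∈ Y*, and let r ∈ Z. Set X = Y × Z × Z* (so X* = Y* × Z* × Z) and define M : X → 2^{X*} by M(x,y,v*) = (−s* + Ax + L*v*) × (By − v*) × {r − Lx + y}. Then M is maximally monotone. -/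
open NormedSpace

/-- Monotonicity of an operator from `Y × Z × Z*` to subsets of `Y* × Z* × Z`,
with the product duality pairing. -/
def PairMono {Y Z : Type*} [NormedAddCommGroup Y] [NormedSpace ℝ Y]
    [NormedAddCommGroup Z] [NormedSpace ℝ Z]
    (M : Y × Z × StrongDual ℝ Z → Set (StrongDual ℝ Y × StrongDual ℝ Z × Z)) : Prop :=
  ∀ p q u w, u ∈ M p → w ∈ M q →
    (0:ℝ) ≤ (u.1 - w.1) (p.1 - q.1) + (u.2.1 - w.2.1) (p.2.1 - q.2.1)
      + (p.2.2 - q.2.2) (u.2.2 - w.2.2)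

/-- Maximal monotonicity in the above sense. -/
def PairMaxMono {Y Z : Type*} [NormedAddCommGroup Y] [NormedSpace ℝ Y]
    [NormedAddCommGroup Z] [NormedSpace ℝ Z]
    (M : Y × Z × StrongDual ℝ Z → Set (StrongDual ℝ Y × StrongDual ℝ Z × Z)) : Prop :=
  PairMono M ∧ ∀ M', PairMono M' → (∀ p, M p ⊆ M' p) → ∀ p, M' p ⊆ M p

/-- The operator `M(x,y,v*) = (−s* + Ax + L*v*) × (By − v*) × {r − Lx + y}`. -/
def tripleM {Y Z : Type*} [NormedAddCommGroup Y] [NormedSpace ℝ Y]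
    [NormedAddCommGroup Z] [NormedSpace ℝ Z]
    (A : Y → Set (StrongDual ℝ Y)) (B : Z → Set (StrongDual ℝ Z)) (L : Y →L[ℝ] Z)
    (sstar : StrongDual ℝ Y) (r : Z) :
    Y × Z × StrongDual ℝ Z → Set (StrongDual ℝ Y × StrongDual ℝ Z × Z) :=
  fun p => {q | (∃ u ∈ A p.1, q.1 = -sstar + u + p.2.2.comp L) ∧
    (∃ w ∈ B p.2.1, q.2.1 = w - p.2.2) ∧ q.2.2 = r - L p.1 + p.2.1}

/-- If a pair `(y, d)` is monotonically related to the whole graph of a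
maximally monotone operator `B`, then `d ∈ B y`. -/
lemma mem_of_forall_aux {Z : Type*} [NormedAddCommGroup Z] [NormedSpace ℝ Z]
    (B : Z → Set (StrongDual ℝ Z))
    (hBmono : ∀ x y u v, u ∈ B x → v ∈ B y → (0:ℝ) ≤ (u - v) (x - y))
    (hBmax : ∀ B' : Z → Set (StrongDual ℝ Z),
      (∀ x y u v, u ∈ B' x → v ∈ B' y → (0:ℝ) ≤ (u - v) (x - y)) →
      (∀ x, B x ⊆ B' x) → ∀ x, B' x ⊆ B x)
    (y : Z) (d : StrongDual ℝ Z)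
    (h : ∀ y2 b2, b2 ∈ B y2 → (0:ℝ) ≤ (d - b2) (y - y2)) : d ∈ B y := by
  have hmono : ∀ p q u v, u ∈ (fun y' => B y' ∪ {b | y' = y ∧ b = d}) p →
      v ∈ (fun y' => B y' ∪ {b | y' = y ∧ b = d}) q → (0:ℝ) ≤ (u - v) (p - q) := by
    intro p q u v hu hv
    rcases hu with hu | ⟨rfl, rfl⟩ <;> rcases hv with hv | ⟨rfl, rfl⟩
    · exact hBmono p q u v hu hv
    · have := h p u hu
      simp only [ContinuousLinearMap.sub_apply, map_sub] at this ⊢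
      linarith
    · exact h q v hv
    · simp
  exact hBmax _ hmono (fun x => Set.subset_union_left) y (Or.inr ⟨rfl, rfl⟩)

/-- Lemma 2.2(ii): the operator `M` is maximally monotone. -/
theorem stmt_7
    {Y Z : Type*} [NormedAddCommGroup Y] [NormedSpace ℝ Y] [CompleteSpace Y]
    [NormedAddCommGroup Z] [NormedSpace ℝ Z] [CompleteSpace Z]
    (hYrefl : Function.Surjective ⇑(inclusionInDoubleDual ℝ Y))
    (hZrefl : Function.Surjective ⇑(inclusionInDoubleDual ℝ Z))
    (A : Y → Set (StrongDual ℝ Y)) (B : Z → Set (StrongDual ℝ Z))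
    (hAmono : ∀ x y u v, u ∈ A x → v ∈ A y → (0:ℝ) ≤ (u - v) (x - y))
    (hAmax : ∀ A' : Y → Set (StrongDual ℝ Y),
      (∀ x y u v, u ∈ A' x → v ∈ A' y → (0:ℝ) ≤ (u - v) (x - y)) →
      (∀ x, A x ⊆ A' x) → ∀ x, A' x ⊆ A x)
    (hBmono : ∀ x y u v, u ∈ B x → v ∈ B y → (0:ℝ) ≤ (u - v) (x - y))
    (hBmax : ∀ B' : Z → Set (StrongDual ℝ Z),
      (∀ x y u v, u ∈ B' x → v ∈ B' y → (0:ℝ) ≤ (u - v) (x - y)) →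
      (∀ x, B x ⊆ B' x) → ∀ x, B' x ⊆ B x)
    (L : Y →L[ℝ] Z) (sstar : StrongDual ℝ Y) (r : Z) :
    PairMaxMono (tripleM A B L sstar r) := by
  constructor
  · rintro ⟨x1, y1, v1⟩ ⟨x2, y2, v2⟩ u w
      ⟨⟨a1, ha1, hu1⟩, ⟨b1, hb1, hu2⟩, hu3⟩ ⟨⟨a2, ha2, hw1⟩, ⟨b2, hb2, hw2⟩, hw3⟩
    simp only at hu1 hu2 hu3 hw1 hw2 hw3 ⊢
    rw [hu1, hu2, hu3, hw1, hw2, hw3]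
    have hA := hAmono x1 x2 a1 a2 ha1 ha2
    have hB := hBmono y1 y2 b1 b2 hb1 hb2
    simp only [ContinuousLinearMap.sub_apply, ContinuousLinearMap.add_apply,
      ContinuousLinearMap.neg_apply, ContinuousLinearMap.coe_comp', Function.comp_apply,
      map_sub, map_add, map_neg] at hA hB ⊢
    linarith
  · rintro M' hM' hsub ⟨x, y, v⟩ ⟨ustar, wstar, z⟩ hq
    -- key inequality against the whole graph
    have key : ∀ x2 (a2 : StrongDual ℝ Y), a2 ∈ A x2 → ∀ y2 (b2 : StrongDual ℝ Z), b2 ∈ B y2 →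
        ∀ v2 : StrongDual ℝ Z,
        (0:ℝ) ≤ (ustar + sstar - v.comp L - a2) (x - x2) + (wstar + v - b2) (y - y2)
          + (v - v2) (z - (r - L x + y)) := by
      intro x2 a2 ha2 y2 b2 hb2 v2
      have h0 := hM' (x, y, v) (x2, y2, v2) (ustar, wstar, z)
        (-sstar + a2 + v2.comp L, b2 - v2, r - L x2 + y2) hq
        (hsub _ ⟨⟨a2, ha2, rfl⟩, ⟨b2, hb2, rfl⟩, rfl⟩)
      simp only at h0
      simp only [ContinuousLinearMap.sub_apply, ContinuousLinearMap.add_apply,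
        ContinuousLinearMap.neg_apply, ContinuousLinearMap.coe_comp', Function.comp_apply,
        map_sub, map_add, map_neg] at h0 ⊢
      linarith
    -- graphs are nonempty
    have hAne : ∃ x0 a0, a0 ∈ A x0 := by
      by_contra h
      push_neg at h
      exact h 0 0 (mem_of_forall_aux A hAmono hAmax 0 0 (fun y2 b2 hb2 => absurd hb2 (h y2 b2)))
    have hBne : ∃ y0 b0, b0 ∈ B y0 := by
      by_contra h
      push_neg at h
      exact h 0 0 (mem_of_forall_aux B hBmono hBmax 0 0 (fun y2 b2 hb2 => absurd hb2 (h y2 b2)))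
    obtain ⟨x0, a0, ha0⟩ := hAne
    obtain ⟨y0, b0, hb0⟩ := hBne
    -- the third component is forced
    have hz : z = r - L x + y := by
      by_contra hne
      have he : z - (r - L x + y) ≠ 0 := sub_ne_zero.mpr hne
      obtain ⟨φ, hφ1, hφ2⟩ := exists_dual_vector ℝ (z - (r - L x + y)) (norm_ne_zero_iff.mpr he)
      set C := (ustar + sstar - v.comp L - a0) (x - x0) + (wstar + v - b0) (y - y0) with hC
      have hkey := key x0 a0 ha0 y0 b0 hb0 (v + ((C + 1) / ‖z - (r - L x + y)‖) • φ)
      have hval : (v - (v + ((C + 1) / ‖z - (r - L x + y)‖) • φ)) (z - (r - L x + y))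
          = -(C + 1) := by
        have hn : ‖z - (r - L x + y)‖ ≠ 0 := norm_ne_zero_iff.mpr he
        simp only [ContinuousLinearMap.sub_apply, ContinuousLinearMap.add_apply,
          ContinuousLinearMap.smul_apply, smul_eq_mul, hφ2]
        field_simp
        simp only [RCLike.ofReal_real_eq_id, id_eq]
        ring
      rw [hval] at hkey
      rw [← hC] at hkey
      linarith
    -- decoupled inequality
    have joint : ∀ x2 a2, a2 ∈ A x2 → ∀ y2 b2, b2 ∈ B y2 →
        (0:ℝ) ≤ (ustar + sstar - v.comp L - a2) (x - x2) + (wstar + v - b2) (y - y2) := by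
      intro x2 a2 ha2 y2 b2 hb2
      have := key x2 a2 ha2 y2 b2 hb2 v
      simp only [sub_self, ContinuousLinearMap.zero_apply, add_zero] at this
      exact this
    -- the A part
    have hF : ∀ x2 a2, a2 ∈ A x2 → (0:ℝ) ≤ (ustar + sstar - v.comp L - a2) (x - x2) := by
      intro x2 a2 ha2
      by_contra hneg
      push_neg at hneg
      have hd : wstar + v ∈ B y := by
        apply mem_of_forall_aux B hBmono hBmax
        intro y2 b2 hb2
        have := joint x2 a2 ha2 y2 b2 hb2
        linarith
      have h2 := joint x2 a2 ha2 y (wstar + v) hd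
      simp only [sub_self, ContinuousLinearMap.zero_apply, add_zero] at h2
      linarith
    have hcA : ustar + sstar - v.comp L ∈ A x :=
      mem_of_forall_aux A hAmono hAmax x _ hF
    -- the B part
    have hG : ∀ y2 b2, b2 ∈ B y2 → (0:ℝ) ≤ (wstar + v - b2) (y - y2) := by
      intro y2 b2 hb2
      have := joint x (ustar + sstar - v.comp L) hcA y2 b2 hb2
      simp only [sub_self, ContinuousLinearMap.zero_apply, zero_add] at this
      exact this
    have hdB : wstar + v ∈ B y := mem_of_forall_aux B hBmono hBmax y _ hG
    exact ⟨⟨ustar + sstar - v.comp L, hcA, by abel⟩, ⟨wstar + v, hdB, by abel⟩, hz⟩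
end

section
/- Let Y and Z be reflexive real Banach spaces, let A : Y → 2^{Y*} and B : Z → 2^{Z*} be maximally monotone, let L : Y → Z be bounded linear, let s* ∈ Y*, and let r ∈ Z. Define M : Y × Z × Z* → 2^{Y* × Z* × Z} by M(x,y,v*) = (−s* + Ax + L*v*) × (By − v*) × {r − Lx + y}, let P be the set of solutions of the primal problem s* ∈ Ax + L*(B(Lx − r)), let D be the set of solutions of the dual problem −r ∈ −L(A^{-1}(s* − L*v*)) + B^{-1}v*, and let Z = {(x,v*) : s* − L*v* ∈ Ax and Lx − r ∈ B^{-1}v*}. Then the following are equivalent: P ≠ ∅; D ≠ ∅; Z ≠ ∅; zer M ≠ ∅. -/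
open NormedSpace

/-- Lemma 2.2(iv): nonemptiness of the primal solution set, the dual solution set,
the Kuhn-Tucker set and `zer M` are all equivalent. -/
theorem stmt_9
    {Y Z : Type*} [NormedAddCommGroup Y] [NormedSpace ℝ Y] [CompleteSpace Y]
    [NormedAddCommGroup Z] [NormedSpace ℝ Z] [CompleteSpace Z]
    (hYrefl : Function.Surjective ⇑(inclusionInDoubleDual ℝ Y))
    (hZrefl : Function.Surjective ⇑(inclusionInDoubleDual ℝ Z))
    (A : Y → Set (StrongDual ℝ Y)) (B : Z → Set (StrongDual ℝ Z))
    (hAmono : ∀ x y u v, u ∈ A x → v ∈ A y → (0:ℝ) ≤ (u - v) (x - y))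
    (hAmax : ∀ A' : Y → Set (StrongDual ℝ Y),
      (∀ x y u v, u ∈ A' x → v ∈ A' y → (0:ℝ) ≤ (u - v) (x - y)) →
      (∀ x, A x ⊆ A' x) → ∀ x, A' x ⊆ A x)
    (hBmono : ∀ x y u v, u ∈ B x → v ∈ B y → (0:ℝ) ≤ (u - v) (x - y))
    (hBmax : ∀ B' : Z → Set (StrongDual ℝ Z),
      (∀ x y u v, u ∈ B' x → v ∈ B' y → (0:ℝ) ≤ (u - v) (x - y)) →
      (∀ x, B x ⊆ B' x) → ∀ x, B' x ⊆ B x)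
    (L : Y →L[ℝ] Z) (sstar : StrongDual ℝ Y) (r : Z) :
    -- P ≠ ∅ ↔ D ≠ ∅
    ((∃ x : Y, ∃ u ∈ A x, ∃ w ∈ B (L x - r), sstar = u + w.comp L) ↔
      (∃ vs : StrongDual ℝ Z, ∃ x' : Y, ∃ w : Z,
        sstar - vs.comp L ∈ A x' ∧ vs ∈ B w ∧ -r = -(L x') + w)) ∧
    -- D ≠ ∅ ↔ Z ≠ ∅
    ((∃ vs : StrongDual ℝ Z, ∃ x' : Y, ∃ w : Z,
        sstar - vs.comp L ∈ A x' ∧ vs ∈ B w ∧ -r = -(L x') + w) ↔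
      (∃ (x : Y) (vs : StrongDual ℝ Z), sstar - vs.comp L ∈ A x ∧ vs ∈ B (L x - r))) ∧
    -- Z ≠ ∅ ↔ zer M ≠ ∅
    ((∃ (x : Y) (vs : StrongDual ℝ Z), sstar - vs.comp L ∈ A x ∧ vs ∈ B (L x - r)) ↔
      (∃ p : Y × Z × StrongDual ℝ Z,
        ((0 : StrongDual ℝ Y), (0 : StrongDual ℝ Z), (0 : Z)) ∈ tripleM A B L sstar r p)) := by
  refine ⟨⟨?_, ?_⟩, ⟨?_, ?_⟩, ?_, ?_⟩
  · rintro ⟨x, u, hu, w, hw, hs⟩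
    refine ⟨w, x, L x - r, ?_, hw, by abel⟩
    have : sstar - w.comp L = u := by rw [hs]; abel
    rwa [this]
  · rintro ⟨vs, x', w, hA, hB, hr⟩
    have hw : w = L x' - r := by
      have := hr; rw [neg_eq_iff_eq_neg] at this; simp at this; linear_combination (norm := abel) this
    refine ⟨x', sstar - vs.comp L, hA, vs, by rwa [← hw], by abel⟩
  · rintro ⟨vs, x', w, hA, hB, hr⟩
    have hw : w = L x' - r := by
      have := hr; rw [neg_eq_iff_eq_neg] at this; simp at this; linear_combination (norm := abel) this
    exact ⟨x', vs, hA, by rwa [← hw]⟩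
  · rintro ⟨x, vs, hA, hB⟩
    exact ⟨vs, x, L x - r, hA, hB, by abel⟩
  · rintro ⟨x, vs, hA, hB⟩
    refine ⟨(x, L x - r, vs), ⟨sstar - vs.comp L, hA, by abel⟩, ⟨vs, hB, by abel⟩, by simp⟩
  · rintro ⟨⟨x, y, vs⟩, ⟨u, hu, h1⟩, ⟨w, hw, h2⟩, h3⟩
    have hwu : w = vs := by linear_combination (norm := abel) h2.symm
    have hy : y = L x - r := by linear_combination (norm := abel) h3.symm
    have hu' : u = sstar - vs.comp L := by simp only at h1; linear_combination (norm := abel) h1.symm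
    exact ⟨x, vs, hu' ▸ hu, by rw [← hy, ← hwu]; exact hw⟩
end

section
/- Let X be a reflexive real Banach space, let D be a nonempty subset of X, let K : D → X* be monotone and maximally monotone (as an operator X → 2^{X*} with domain D), and let φ : X → ℝ be a convex, lower semicontinuous, coercive function (φ(x) → ∞ as ‖x‖ → ∞) that is everywhere finite. Then ran K ⊂ ran(K + ∂φ), where ∂φ is the convex subdifferential of φ. -/
open NormedSpace Filter

/-- Monotonicity of a set-valued operator from a Banach space into its dual. -/
def BMono {X : Type*} [NormedAddCommGroup X] [NormedSpace ℝ X]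
    (A : X → Set (StrongDual ℝ X)) : Prop :=
  ∀ x y u v, u ∈ A x → v ∈ A y → (0:ℝ) ≤ (u - v) (x - y)

/-- Maximal monotonicity of a set-valued operator from a Banach space into its dual. -/
def BMaxMono {X : Type*} [NormedAddCommGroup X] [NormedSpace ℝ X]
    (A : X → Set (StrongDual ℝ X)) : Prop :=
  BMono A ∧ ∀ A', BMono A' → (∀ x, A x ⊆ A' x) → ∀ x, A' x ⊆ A x

/-- `K` viewed as a set-valued operator with domain `D`. -/
def opOfMap {X : Type*} [NormedAddCommGroup X] [NormedSpace ℝ X]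
    (D : Set X) (K : X → StrongDual ℝ X) : X → Set (StrongDual ℝ X) :=
  fun x => {w | x ∈ D ∧ w = K x}

/-- The convex subdifferential of `φ : X → ℝ`. -/
def subdiff {X : Type*} [NormedAddCommGroup X] [NormedSpace ℝ X]
    (φ : X → ℝ) (x : X) : Set (StrongDual ℝ X) :=
  {u | ∀ y, u (y - x) + φ x ≤ φ y}

open Topology

lemma flip_pair {X : Type*} [NormedAddCommGroup X] [NormedSpace ℝ X]
    (f g : StrongDual ℝ X) (a b : X) : ((f - g) (a - b) : ℝ) = (g - f) (b - a) := by
  simp only [ContinuousLinearMap.sub_apply, map_sub]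
  ring

lemma pair_expand {X : Type*} [NormedAddCommGroup X] [NormedSpace ℝ X]
    (f g : StrongDual ℝ X) (a b : X) :
    ((f - g) (a - b) : ℝ) = f a - f b - g a + g b := by
  simp only [ContinuousLinearMap.sub_apply, map_sub]
  ring

lemma aux_max {X : Type*} [NormedAddCommGroup X] [NormedSpace ℝ X]
    {D : Set X} {K : X → StrongDual ℝ X} (hKmax : BMaxMono (opOfMap D K))
    {y : X} {v : StrongDual ℝ X} (h : ∀ a ∈ D, 0 ≤ ((v - K a) (y - a) : ℝ)) :
    y ∈ D ∧ v = K y := by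
  set A' : X → Set (StrongDual ℝ X) := fun z => opOfMap D K z ∪ {w' | z = y ∧ w' = v} with hA'
  have mono : BMono A' := by
    intro p q up vq hup hvq
    rcases hup with hup | hup <;> rcases hvq with hvq | hvq
    · exact hKmax.1 p q up vq hup hvq
    · rw [hup.2, hvq.2, hvq.1, flip_pair]
      exact h p hup.1
    · rw [hup.2, hup.1, hvq.2]
      exact h q hvq.1
    · rw [hup.1, hvq.1, hup.2, hvq.2]
      simp
  have ext : ∀ z, opOfMap D K z ⊆ A' z := fun z => Set.subset_union_left
  have hy : v ∈ A' y := Or.inr ⟨rfl, rfl⟩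
  have := hKmax.2 A' mono ext y hy
  exact ⟨this.1, this.2⟩

lemma aux_minorant {X : Type*} [NormedAddCommGroup X] [NormedSpace ℝ X]
    {φ : X → ℝ} (hconv : ConvexOn ℝ Set.univ φ) (hlsc : LowerSemicontinuous φ)
    (ζ : X) (ε : ℝ) (hε : 0 < ε) :
    ∃ ℓ : StrongDual ℝ X, ∀ z, ℓ z - ℓ ζ + φ ζ - ε ≤ φ z := by
  have hepi_closed : IsClosed {p : X × ℝ | φ p.1 ≤ p.2} := by
    have hopen : IsOpen {p : X × ℝ | p.2 < φ p.1} := by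
      rw [isOpen_iff_mem_nhds]
      rintro ⟨x, t⟩ (ht : t < φ x)
      have hy : t < (t + φ x)/2 := by linarith
      have hy2 : (t + φ x)/2 < φ x := by linarith
      have hx : {z : X | (t + φ x)/2 < φ z} ∈ 𝓝 x := hlsc x ((t + φ x)/2) hy2
      have hmem : ({z : X | (t + φ x)/2 < φ z} ×ˢ Set.Iio ((t + φ x)/2)) ∈ (𝓝 x ×ˢ 𝓝 t) :=
        Filter.prod_mem_prod hx (Iio_mem_nhds hy)
      rw [nhds_prod_eq]
      refine Filter.mem_of_superset hmem ?_
      rintro ⟨z, s⟩ ⟨h1, h2⟩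
      simp only [Set.mem_setOf_eq] at h1 h2 ⊢
      exact lt_trans h2 h1
    have : {p : X × ℝ | φ p.1 ≤ p.2} = {p : X × ℝ | p.2 < φ p.1}ᶜ := by
      ext p; simp [not_lt]
    rw [this]
    exact hopen.isClosed_compl
  have hepi_convex : Convex ℝ {p : X × ℝ | φ p.1 ≤ p.2} := by
    have := hconv.convex_epigraph
    simpa using this
  have hnot : (ζ, φ ζ - ε) ∉ {p : X × ℝ | φ p.1 ≤ p.2} := by
    simp only [Set.mem_setOf_eq]
    linarith
  obtain ⟨f, u, hfepi, hfpt⟩ := geometric_hahn_banach_closed_point hepi_convex hepi_closed hnot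
  have hdec : ∀ (z : X) (t : ℝ), f (z, t) = f (z, 0) + t * f (0, 1) := by
    intro z t
    have : (z, t) = (z, (0:ℝ)) + t • ((0:X), (1:ℝ)) := by
      simp [Prod.ext_iff]
    rw [this, map_add, map_smul]
    simp [smul_eq_mul]
  -- b := f (0,1) ; show b < 0
  set b : ℝ := f (0, 1) with hb
  have hepi' : ∀ z t, φ z ≤ t → f (z, 0) + t * b < u := by
    intro z t ht
    have := hfepi (z, t) ht
    rwa [hdec] at this
  have hbneg : b < 0 := by
    rcases lt_trichotomy b 0 with h | h | h
    · exact h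
    · exfalso
      have h1 : f (ζ, 0) + φ ζ * b < u := hepi' ζ (φ ζ) le_rfl
      have h2 : u < f (ζ, 0) + (φ ζ - ε) * b := by
        have := hfpt; rwa [hdec] at this
      rw [h] at h1 h2
      simp at h1 h2
      linarith
    · exfalso
      obtain ⟨t0, ht1, ht2⟩ : ∃ t0, φ ζ ≤ t0 ∧ (u - f (ζ,0))/b < t0 := by
        refine ⟨max (φ ζ) ((u - f (ζ,0))/b) + 1, ?_, ?_⟩
        · have := le_max_left (φ ζ) ((u - f (ζ,0))/b); linarith
        · have := le_max_right (φ ζ) ((u - f (ζ,0))/b); linarith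
      have hlt := hepi' ζ t0 ht1
      rw [div_lt_iff₀ h] at ht2
      linarith
  set c : ℝ := -b with hc
  have hcpos : 0 < c := by simp [hc]; linarith
  refine ⟨c⁻¹ • (f.comp (ContinuousLinearMap.inl ℝ X ℝ)), ?_⟩
  intro z
  have h1 : f (z, 0) - c * φ z < u := by
    have := hepi' z (φ z) le_rfl
    simp only [hc] at *
    nlinarith
  have h2 : u < f (ζ, 0) - c * (φ ζ - ε) := by
    have := hfpt
    rw [hdec] at this
    simp only [hc] at *
    nlinarith
  have key : f (z, 0) - f (ζ, 0) + c * (φ ζ - ε) ≤ c * φ z := by linarith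
  have happ : ∀ w : X, (c⁻¹ • (f.comp (ContinuousLinearMap.inl ℝ X ℝ))) w = c⁻¹ * f (w, 0) := by
    intro w
    simp [ContinuousLinearMap.smul_apply, ContinuousLinearMap.comp_apply,
      ContinuousLinearMap.inl_apply, smul_eq_mul]
  rw [happ z, happ ζ]
  have : c⁻¹ * f (z,0) - c⁻¹ * f (ζ,0) + φ ζ - ε ≤ φ z ↔
      c * (c⁻¹ * f (z,0) - c⁻¹ * f (ζ,0) + φ ζ - ε) ≤ c * φ z := by
    constructor
    · intro h; exact mul_le_mul_of_nonneg_left h hcpos.le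
    · intro h; exact le_of_mul_le_mul_left h hcpos
  rw [this]
  have hcc : c * c⁻¹ = 1 := mul_inv_cancel₀ hcpos.ne'
  calc c * (c⁻¹ * f (z,0) - c⁻¹ * f (ζ,0) + φ ζ - ε)
      = (c * c⁻¹) * f (z,0) - (c * c⁻¹) * f (ζ,0) + c * (φ ζ - ε) := by ring
    _ = f (z,0) - f (ζ,0) + c * (φ ζ - ε) := by rw [hcc]; ring
    _ ≤ c * φ z := key


lemma aux_localbound {X : Type*} [NormedAddCommGroup X] [NormedSpace ℝ X] [CompleteSpace X]
    {φ : X → ℝ} (hconv : ConvexOn ℝ Set.univ φ) (hlsc : LowerSemicontinuous φ)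
    (x : X) : ∃ r > (0:ℝ), ∃ M : ℝ, ∀ z, ‖z - x‖ < r → φ z ≤ M := by
  have hclosed : ∀ n : ℕ, IsClosed {z : X | φ z ≤ (n:ℝ)} := by
    intro n
    have : {z : X | φ z ≤ (n:ℝ)} = {z : X | (n:ℝ) < φ z}ᶜ := by ext z; simp [not_lt]
    rw [this]
    exact (hlsc.isOpen_preimage _).isClosed_compl
  have hcover : ⋃ n : ℕ, {z : X | φ z ≤ (n:ℝ)} = Set.univ := by
    ext z
    simp only [Set.mem_iUnion, Set.mem_setOf_eq, Set.mem_univ, iff_true]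
    exact exists_nat_ge (φ z)
  obtain ⟨n, hn⟩ := nonempty_interior_of_iUnion_of_closed hclosed hcover
  obtain ⟨z₀, hz₀⟩ := hn
  obtain ⟨r₀, hr₀, hball⟩ := Metric.isOpen_iff.1 isOpen_interior z₀ hz₀
  have hb : ∀ z, ‖z - z₀‖ < r₀ → φ z ≤ (n:ℝ) := by
    intro z hz
    have h1 : z ∈ Metric.ball z₀ r₀ := by
      rw [Metric.mem_ball, dist_eq_norm]; exact hz
    have h2 : z ∈ {z : X | φ z ≤ (n:ℝ)} := interior_subset (hball h1)
    exact h2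
  refine ⟨r₀/2, by linarith, ((n:ℝ) + φ ((2:ℝ) • x - z₀))/2, ?_⟩
  intro z hz
  set b : X := z₀ + (2:ℝ) • (z - x) with hbdef
  set q : X := (2:ℝ) • x - z₀ with hqdef
  have hbpt : φ b ≤ (n:ℝ) := by
    apply hb
    have e : b - z₀ = (2:ℝ) • (z - x) := by rw [hbdef]; abel
    rw [e, norm_smul]
    simp only [Real.norm_ofNat]
    linarith
  have hrep : z = (1/2 : ℝ) • b + (1/2 : ℝ) • q := by
    rw [hbdef, hqdef]
    module
  have hcx := hconv.2 (Set.mem_univ b) (Set.mem_univ q)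
      (by norm_num : (0:ℝ) ≤ 1/2) (by norm_num : (0:ℝ) ≤ 1/2) (by norm_num)
  rw [← hrep] at hcx
  have : φ z ≤ (1/2:ℝ) * φ b + (1/2:ℝ) * φ q := by
    simpa [smul_eq_mul] using hcx
  rw [hqdef] at *
  linarith


lemma aux_growth {X : Type*} [NormedAddCommGroup X] [NormedSpace ℝ X]
    {φ : X → ℝ} (hconv : ConvexOn ℝ Set.univ φ)
    (hcoer : Tendsto φ (Bornology.cobounded X) atTop)
    (hmin : ∃ ℓ : StrongDual ℝ X, ∀ z, ℓ z - ℓ 0 + φ 0 - 1 ≤ φ z) :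
    ∃ ε > (0:ℝ), ∃ C : ℝ, ∀ z : X, ε * ‖z‖ ≤ φ z + C := by
  obtain ⟨ℓ, hℓ⟩ := hmin
  -- coercivity: outside a ball, φ ≥ φ 0 + 1
  have hev : ∀ᶠ z in Bornology.cobounded X, φ 0 + 1 ≤ φ z := hcoer.eventually_ge_atTop _
  have hbdd : Bornology.IsBounded {z : X | ¬ (φ 0 + 1 ≤ φ z)} := by
    rw [Bornology.isBounded_def]
    have : {z : X | ¬ (φ 0 + 1 ≤ φ z)}ᶜ = {z : X | φ 0 + 1 ≤ φ z} := by
      ext z; simp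
    rw [this]
    exact hev
  obtain ⟨R', hR'⟩ := hbdd.subset_closedBall 0
  set R : ℝ := max R' 0 + 1 with hR
  have hRpos : 0 < R := by
    have := le_max_right R' 0; rw [hR]; linarith
  have hout : ∀ z : X, R ≤ ‖z‖ → φ 0 + 1 ≤ φ z := by
    intro z hz
    by_contra hcon
    have : z ∈ Metric.closedBall 0 R' := hR' hcon
    rw [Metric.mem_closedBall, dist_zero_right] at this
    have := le_max_left R' 0
    rw [hR] at hz
    linarith
  -- ray estimate for ‖z‖ ≥ R : φ z ≥ φ 0 + ‖z‖ / R
  have hray : ∀ z : X, R ≤ ‖z‖ → φ 0 + ‖z‖ / R ≤ φ z := by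
    intro z hz
    have hnz : 0 < ‖z‖ := lt_of_lt_of_le hRpos hz
    set t : ℝ := R / ‖z‖ with ht
    have htpos : 0 < t := div_pos hRpos hnz
    have htle : t ≤ 1 := by
      rw [ht, div_le_one hnz]; exact hz
    have hnorm : ‖t • z‖ = R := by
      rw [norm_smul, Real.norm_eq_abs, abs_of_pos htpos, ht]
      field_simp
    have h1 : φ 0 + 1 ≤ φ (t • z) := hout _ (le_of_eq hnorm.symm)
    have hcx := hconv.2 (Set.mem_univ (0:X)) (Set.mem_univ z)
        (by linarith : (0:ℝ) ≤ 1 - t) htpos.le (by ring)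
    rw [smul_zero, zero_add] at hcx
    have h2 : φ (t • z) ≤ (1 - t) * φ 0 + t * φ z := by simpa [smul_eq_mul] using hcx
    -- from φ0 + 1 ≤ (1-t)φ0 + tφz : 1 + tφ0 ≤ tφz, divide by t
    have h3 : 1 + t * φ 0 ≤ t * φ z := by linarith
    have h4 : (1 + t * φ 0) / t ≤ φ z := by
      rw [div_le_iff₀ htpos]; linarith [mul_comm t (φ z)]
    have h5 : (1 + t * φ 0) / t = 1 / t + φ 0 := by field_simp
    have h6 : 1 / t = ‖z‖ / R := by rw [ht]; field_simp
    rw [h5, h6] at h4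
    linarith
  refine ⟨1 / (2 * R), by positivity, |φ 0| + ‖ℓ‖ * R + 2, ?_⟩
  intro z
  rcases le_or_gt R ‖z‖ with hc | hc
  · have := hray z hc
    have h7 : 1 / (2 * R) * ‖z‖ ≤ ‖z‖ / R := by
      rw [div_mul_eq_mul_div, div_le_div_iff₀ (by positivity) hRpos]
      nlinarith [norm_nonneg z]
    have h8 : -|φ 0| ≤ φ 0 := neg_abs_le _
    nlinarith [norm_nonneg ℓ, norm_nonneg z]
  · -- inside the ball: use the affine minorant
    have hm := hℓ z
    rw [map_zero] at hm
    have hb : -(‖ℓ‖ * ‖z‖) ≤ ℓ z := by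
      have := le_abs_self (-(ℓ z))
      have habs : |ℓ z| ≤ ‖ℓ‖ * ‖z‖ := ℓ.le_opNorm z
      have := abs_le.1 habs
      linarith [this.1]
    have h9 : 1 / (2 * R) * ‖z‖ ≤ 1/2 := by
      rw [div_mul_eq_mul_div, div_le_div_iff₀ (by positivity) (by norm_num : (0:ℝ) < 2)]
      nlinarith
    have h8 : -|φ 0| ≤ φ 0 := neg_abs_le _
    nlinarith [norm_nonneg ℓ, norm_nonneg z, mul_le_mul_of_nonneg_left hc.le (norm_nonneg ℓ)]



set_option maxHeartbeats 1000000 in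
/-- Proposition 3.10(i)[f]: if `K` is (maximally) monotone and `φ` is a real-valued
lower semicontinuous coercive convex function, then `ran K ⊆ ran (K + ∂φ)`. -/
theorem stmt_13
    {X : Type*} [NormedAddCommGroup X] [NormedSpace ℝ X] [CompleteSpace X]
    (hrefl : Function.Surjective ⇑(inclusionInDoubleDual ℝ X))
    (D : Set X) (hD : D.Nonempty)
    (K : X → StrongDual ℝ X)
    (hKmono : BMono (opOfMap D K))
    (hKmax : BMaxMono (opOfMap D K))
    (φ : X → ℝ)
    (hconv : ConvexOn ℝ Set.univ φ)
    (hlsc : LowerSemicontinuous φ)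
    (hcoer : Tendsto φ (Bornology.cobounded X) atTop) :
    ∀ x ∈ D, ∃ p ∈ D, ∃ u ∈ subdiff φ p, K x = K p + u := by
  intro x hx
  set w : StrongDual ℝ X := K x with hw
  -- monotonicity in scalar form
  have hmono2 : ∀ a ∈ D, ∀ b ∈ D, (0:ℝ) ≤ (K a - K b) (a - b) := by
    intro a ha b hb
    exact hKmono a b (K a) (K b) ⟨ha, rfl⟩ ⟨hb, rfl⟩
  obtain ⟨r, hr, Mx, hMx⟩ := aux_localbound hconv hlsc x
  obtain ⟨ε₀, hε₀, C₀, hC₀⟩ := aux_growth hconv hcoer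
    (aux_minorant hconv hlsc 0 1 one_pos)
  -- the two convex sets
  set EpiG : Set (X × StrongDual ℝ X × ℝ) :=
    {q | ∀ z' : X, q.2.1 z' - φ z' + φ q.1 ≤ q.2.2} with hEpiG
  set B : Set (X × StrongDual ℝ X × ℝ) :=
    {q | ∀ a ∈ D, (K a) q.1 + w a - q.2.1 a - (K a) a - w q.1 + q.2.2 ≤ 0} with hB
  have hEpiG_cx : Convex ℝ EpiG := by
    rintro q1 hq1 q2 hq2 α β hα hβ hαβ
    intro z'
    have e1 : ((α • q1 + β • q2).2.1 : StrongDual ℝ X) z' = α * q1.2.1 z' + β * q2.2.1 z' := by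
      simp [Prod.smul_snd, Prod.smul_fst, smul_eq_mul]
    have e2 : (α • q1 + β • q2).2.2 = α * q1.2.2 + β * q2.2.2 := by
      simp [Prod.smul_snd, smul_eq_mul]
    have e3 : (α • q1 + β • q2).1 = α • q1.1 + β • q2.1 := rfl
    have hφ : φ ((α • q1 + β • q2).1) ≤ α * φ q1.1 + β * φ q2.1 := by
      rw [e3]
      have := hconv.2 (Set.mem_univ q1.1) (Set.mem_univ q2.1) hα hβ hαβ
      simpa [smul_eq_mul] using this
    have h1 := hq1 z'
    have h2 := hq2 z'
    rw [e1, e2]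
    have hs1 : α * φ z' + β * φ z' = φ z' := by
      have : (α + β) * φ z' = φ z' := by rw [hαβ]; ring
      linarith [this]
    linarith [mul_le_mul_of_nonneg_left h1 hα, mul_le_mul_of_nonneg_left h2 hβ, hφ, hs1]
  have hB_cx : Convex ℝ B := by
    rintro q1 hq1 q2 hq2 α β hα hβ hαβ
    intro a ha
    have h1 := hq1 a ha
    have h2 := hq2 a ha
    have e1 : (K a) ((α • q1 + β • q2).1) = α * (K a) q1.1 + β * (K a) q2.1 := by
      simp [Prod.smul_fst, map_add, map_smul, smul_eq_mul]
    have e2 : w ((α • q1 + β • q2).1) = α * w q1.1 + β * w q2.1 := by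
      simp [Prod.smul_fst, map_add, map_smul, smul_eq_mul]
    have e3 : ((α • q1 + β • q2).2.1 : StrongDual ℝ X) a = α * q1.2.1 a + β * q2.2.1 a := by
      simp [Prod.smul_snd, Prod.smul_fst, smul_eq_mul]
    have e4 : (α • q1 + β • q2).2.2 = α * q1.2.2 + β * q2.2.2 := by
      simp [Prod.smul_snd, smul_eq_mul]
    rw [e1, e2, e3, e4]
    have hs1 : α * w a + β * w a = w a := by
      have : (α + β) * w a = w a := by rw [hαβ]; ring
      linarith [this]
    have hs2 : α * (K a) a + β * (K a) a = (K a) a := by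
      have : (α + β) * (K a) a = (K a) a := by rw [hαβ]; ring
      linarith [this]
    linarith [mul_le_mul_of_nonneg_left h1 hα, mul_le_mul_of_nonneg_left h2 hβ, hs1, hs2]
  -- open box inside EpiG
  set U : Set (X × StrongDual ℝ X × ℝ) :=
    (Metric.ball x r) ×ˢ (Metric.ball (0 : StrongDual ℝ X) ε₀) ×ˢ (Set.Ioi (Mx + C₀)) with hU
  have hU_open : IsOpen U :=
    Metric.isOpen_ball.prod (Metric.isOpen_ball.prod isOpen_Ioi)
  have hU_sub : U ⊆ EpiG := by
    rintro ⟨z, zs, t⟩ ⟨h1, h2, h3⟩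
    intro z'
    have hz : ‖z - x‖ < r := by rwa [Metric.mem_ball, dist_eq_norm] at h1
    have hzs : ‖zs‖ < ε₀ := by rwa [Metric.mem_ball, dist_zero_right] at h2
    have ht : Mx + C₀ < t := h3
    have hφz : φ z ≤ Mx := hMx z hz
    have happ : zs z' ≤ φ z' + C₀ := by
      have h4 : zs z' ≤ ‖zs‖ * ‖z'‖ := by
        have h4a := zs.le_opNorm z'
        have h4b : zs z' ≤ ‖zs z'‖ := by
          rw [Real.norm_eq_abs]; exact le_abs_self _
        linarith
      have h5 : ‖zs‖ * ‖z'‖ ≤ ε₀ * ‖z'‖ :=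
        mul_le_mul_of_nonneg_right hzs.le (norm_nonneg _)
      have h6 := hC₀ z'
      linarith
    simp only
    linarith
  have hU_ne : (x, (0 : StrongDual ℝ X), Mx + C₀ + 1) ∈ U := by
    refine ⟨?_, ?_, ?_⟩
    · simp [Metric.mem_ball, hr]
    · simp [Metric.mem_ball, hε₀]
    · simp only [Set.mem_Ioi]; linarith
  have hU_int : U ⊆ interior EpiG := interior_maximal hU_sub hU_open
  -- B nonempty
  have hxB : (x, (0 : StrongDual ℝ X), (0:ℝ)) ∈ B := by
    intro a ha
    have := hmono2 x hx a ha
    rw [pair_expand] at this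
    simp only [ContinuousLinearMap.zero_apply]
    rw [hw]
    linarith
  -- disjointness
  have hdisj : Disjoint (interior EpiG) B := by
    rw [Set.disjoint_left]
    rintro ⟨z, zs, t⟩ hqA hqB
    obtain ⟨ρ, hρ, hball⟩ := Metric.isOpen_iff.1 isOpen_interior _ hqA
    have hq2 : (z, zs, t - ρ/2) ∈ EpiG := by
      apply interior_subset
      apply hball
      rw [Metric.mem_ball, dist_eq_norm]
      have e0 : (z, zs, t - ρ/2) - (z, zs, t) = ((0:X), (0:StrongDual ℝ X), -(ρ/2)) := by
        ext <;> simp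
      rw [e0]
      rw [Prod.norm_def]
      apply max_lt (by simpa using hρ)
      rw [Prod.norm_def]
      apply max_lt (by simpa using hρ)
      rw [Real.norm_eq_abs, abs_of_neg (by linarith)]
      linarith
    have hzz : zs z ≤ t - ρ/2 := by
      have := hq2 z
      simp only at this
      linarith
    -- from B : t ≤ zs z
    have hexa : ∃ a ∈ D, ((w - zs - K a) (z - a) : ℝ) ≤ 0 := by
      by_contra hcon
      push_neg at hcon
      have : ∀ a ∈ D, (0:ℝ) ≤ ((w - zs - K a) (z - a)) := fun a ha => (hcon a ha).le
      obtain ⟨hzD, hzK⟩ := aux_max hKmax this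
      have := hcon z hzD
      simp at this
    obtain ⟨a, ha, hle⟩ := hexa
    have hBa := hqB a ha
    have hexp : ((w - zs - K a) (z - a) : ℝ)
        = -((K a) z + w a - zs a - (K a) a - w z) - zs z := by
      simp only [ContinuousLinearMap.sub_apply, map_sub]
      ring
    rw [hexp] at hle
    linarith
  -- separation
  obtain ⟨Λ, s, hΛA, hΛB⟩ :=
    geometric_hahn_banach_open (hEpiG_cx.interior) isOpen_interior hB_cx hdisj
  -- components of Λ
  set η₁ : StrongDual ℝ X := Λ.comp (ContinuousLinearMap.inl ℝ X (StrongDual ℝ X × ℝ)) with hη₁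
  set η₂ : StrongDual ℝ (StrongDual ℝ X) :=
    Λ.comp ((ContinuousLinearMap.inr ℝ X (StrongDual ℝ X × ℝ)).comp
      (ContinuousLinearMap.inl ℝ (StrongDual ℝ X) ℝ)) with hη₂
  set a : ℝ := Λ (0, 0, 1) with ha
  have hΛdec : ∀ (z : X) (zs : StrongDual ℝ X) (t : ℝ), Λ (z, zs, t) = η₁ z + η₂ zs + t * a := by
    intro z zs t
    have e : ((z, zs, t) : X × StrongDual ℝ X × ℝ)
        = ((z, 0, 0) : X × StrongDual ℝ X × ℝ) + ((0, zs, 0) : X × StrongDual ℝ X × ℝ)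
          + t • ((0, 0, 1) : X × StrongDual ℝ X × ℝ) := by
      ext <;> simp
    rw [e, map_add, map_add, map_smul, smul_eq_mul]
    rfl
  have hAx : ∀ t : ℝ, Mx + C₀ < t → ((x, (0:StrongDual ℝ X), t) : X × StrongDual ℝ X × ℝ) ∈ interior EpiG := by
    intro t ht
    apply hU_int
    exact ⟨by simp [Metric.mem_ball, hr], by simp [Metric.mem_ball, hε₀], ht⟩
  have hanonpos : a ≤ 0 := by
    by_contra hcon
    push_neg at hcon
    set T : ℝ := max (Mx + C₀ + 1) ((s - η₁ x) / a + 1) with hT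
    have hT1 : Mx + C₀ < T := by
      have := le_max_left (Mx + C₀ + 1) ((s - η₁ x) / a + 1)
      linarith
    have hlt := hΛA _ (hAx T hT1)
    rw [hΛdec] at hlt
    rw [map_zero] at hlt
    have hT2 : (s - η₁ x)/a < T := by
      have := le_max_right (Mx + C₀ + 1) ((s - η₁ x) / a + 1)
      linarith
    rw [div_lt_iff₀ hcon] at hT2
    linarith
  have haneg : a < 0 := by
    rcases lt_or_eq_of_le hanonpos with h | h
    · exact h
    · exfalso
      have h1 := hΛA _ (hAx (Mx + C₀ + 1) (by linarith))
      have h2 := hΛB _ hxB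
      rw [hΛdec] at h1 h2
      rw [map_zero] at h1 h2
      rw [h] at h1 h2
      simp only [mul_zero, zero_mul, add_zero] at h1 h2
      linarith
  set c : ℝ := -a with hcdef
  have hcpos : 0 < c := by rw [hcdef]; linarith
  have hcc : c * c⁻¹ = 1 := mul_inv_cancel₀ hcpos.ne'
  set u : StrongDual ℝ X := c⁻¹ • η₁ with hu
  set ηη : StrongDual ℝ (StrongDual ℝ X) := c⁻¹ • η₂ with hηη
  set σ : ℝ := s / c with hσ
  obtain ⟨ζ, hζ⟩ := hrefl ηη
  have heval : ∀ zs : StrongDual ℝ X, ηη zs = zs ζ := by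
    intro zs
    rw [← hζ]
    rfl
  have hcσ : c * σ = s := by rw [hσ]; field_simp
  have happu : ∀ z : X, u z = c⁻¹ * η₁ z := by
    intro z; rw [hu]; simp [smul_eq_mul]
  have happη : ∀ zs : StrongDual ℝ X, zs ζ = c⁻¹ * η₂ zs := by
    intro zs
    rw [← heval zs, hηη]
    simp [smul_eq_mul]
  have hE1 : ∀ q ∈ EpiG, u q.1 + q.2.1 ζ - q.2.2 ≤ σ := by
    intro q hq
    have hΛq : Λ q ≤ s := by
      have hq₀i : ((x, (0:StrongDual ℝ X), Mx + C₀ + 1) : X × StrongDual ℝ X × ℝ) ∈ interior EpiG :=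
        hAx _ (by linarith)
      refine le_of_forall_pos_le_add ?_
      intro ε hε
      set q₀ : X × StrongDual ℝ X × ℝ := (x, 0, Mx + C₀ + 1) with hq₀
      set A0 : ℝ := |Λ q - Λ q₀| with hA0
      have hA0nn : 0 ≤ A0 := abs_nonneg _
      set τ : ℝ := min (1/2) (ε / (A0 + 1)) with hτ
      have hτpos : 0 < τ := lt_min (by norm_num) (by positivity)
      have hτle : τ ≤ 1/2 := min_le_left _ _
      have hmem := hEpiG_cx.combo_interior_self_mem_interior hq₀i hq hτpos
        (by linarith : (0:ℝ) ≤ 1 - τ) (by ring)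
      have hlt := hΛA _ hmem
      rw [map_add, map_smul, map_smul] at hlt
      simp only [smul_eq_mul] at hlt
      have hb1 : τ ≤ ε / (A0 + 1) := min_le_right _ _
      have hb2 : τ * (A0 + 1) ≤ ε := by
        rw [← le_div_iff₀ (by positivity : (0:ℝ) < A0 + 1)]
        exact hb1
      have hb3 : Λ q - Λ q₀ ≤ A0 := by rw [hA0]; exact le_abs_self _
      nlinarith [hτpos, hb3]
    have hΛq' : η₁ q.1 + η₂ q.2.1 + q.2.2 * a ≤ s := by
      rw [← hΛdec q.1 q.2.1 q.2.2]
      exact hΛq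
    have hgoal : c * (u q.1 + q.2.1 ζ - q.2.2) ≤ c * σ := by
      rw [hcσ, happu, happη]
      calc c * (c⁻¹ * η₁ q.1 + c⁻¹ * η₂ q.2.1 - q.2.2)
          = (c * c⁻¹) * η₁ q.1 + (c * c⁻¹) * η₂ q.2.1 - c * q.2.2 := by ring
        _ = η₁ q.1 + η₂ q.2.1 - c * q.2.2 := by rw [hcc]; ring
        _ ≤ s := by
            have : q.2.2 * a = -(c * q.2.2) := by rw [hcdef]; ring
            linarith [hΛq', this.le, this.ge]
    exact le_of_mul_le_mul_left hgoal hcpos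
  have hB1 : ∀ q ∈ B, σ ≤ u q.1 + q.2.1 ζ - q.2.2 := by
    intro q hq
    have hΛq : s ≤ Λ q := hΛB _ hq
    have hΛq' : s ≤ η₁ q.1 + η₂ q.2.1 + q.2.2 * a := by
      rw [← hΛdec q.1 q.2.1 q.2.2]
      exact hΛq
    have hgoal : c * σ ≤ c * (u q.1 + q.2.1 ζ - q.2.2) := by
      rw [hcσ, happu, happη]
      calc s ≤ η₁ q.1 + η₂ q.2.1 + q.2.2 * a := hΛq'
        _ = η₁ q.1 + η₂ q.2.1 - c * q.2.2 := by rw [hcdef]; ring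
        _ = (c * c⁻¹) * η₁ q.1 + (c * c⁻¹) * η₂ q.2.1 - c * q.2.2 := by rw [hcc]; ring
        _ = c * (c⁻¹ * η₁ q.1 + c⁻¹ * η₂ q.2.1 - q.2.2) := by ring
    exact le_of_mul_le_mul_left hgoal hcpos
  -- pointwise Fenchel--Moreau style bound
  have hminz : ∀ z : X, u z - φ z + φ ζ ≤ σ := by
    intro z
    refine le_of_forall_pos_le_add ?_
    intro ε hε
    obtain ⟨ℓ, hℓ⟩ := aux_minorant hconv hlsc ζ ε hε
    have hmem : ((z, ℓ, φ z - (φ ζ - ε - ℓ ζ)) : X × StrongDual ℝ X × ℝ) ∈ EpiG := by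
      intro z'
      have := hℓ z'
      simp only
      linarith
    have := hE1 _ hmem
    simp only at this
    linarith
  have huζσ : u ζ ≤ σ := by
    have := hminz ζ
    linarith
  -- the pair (ζ, w - u) is monotonically related to the graph of K
  have hrel : ∀ b ∈ D, (0:ℝ) ≤ ((w - u) - K b) (ζ - b) := by
    intro b hb
    have hmemB : ((b, w - K b, w b - (K b) b) : X × StrongDual ℝ X × ℝ) ∈ B := by
      intro a' ha'
      have := hmono2 b hb a' ha'
      rw [pair_expand] at this
      simp only [ContinuousLinearMap.sub_apply]
      linarith
    have hBb := hB1 _ hmemB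
    simp only [ContinuousLinearMap.sub_apply] at hBb
    have hexp : (((w - u) - K b) (ζ - b) : ℝ)
        = w ζ - w b - u ζ + u b - (K b) ζ + (K b) b := by
      simp only [ContinuousLinearMap.sub_apply, map_sub]
      ring
    rw [hexp]
    linarith
  obtain ⟨hζD, hKζ⟩ := aux_max hKmax hrel
  -- σ ≤ u ζ
  have hKζa : ∀ z : X, (K ζ) z = w z - u z := by
    intro z
    rw [← hKζ]
    simp [ContinuousLinearMap.sub_apply]
  have hmemB0 : ((ζ, u, w ζ - (K ζ) ζ) : X × StrongDual ℝ X × ℝ) ∈ B := by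
    intro a' ha'
    have := hmono2 ζ hζD a' ha'
    rw [pair_expand] at this
    have h1 := hKζa a'
    have h2 := hKζa ζ
    simp only
    linarith
  have hB0 := hB1 _ hmemB0
  simp only at hB0
  have hσuζ : σ ≤ u ζ := by
    have h2 := hKζa ζ
    linarith
  refine ⟨ζ, hζD, u, ?_, ?_⟩
  · intro y
    have h1 := hminz y
    have h2 : u (y - ζ) = u y - u ζ := map_sub u y ζ
    rw [h2]
    linarith
  · rw [← hKζ, sub_add_cancel, hw]
end
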